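/- arXiv:1511.04923 — 4 statements merged into one kernel-verified Lean document; each statement's English description precedes it below -/
import Mathlib

section
/- Let α, λ > 0, τ ∈ (0,1), and let X be a strictly positive random variable. Define X_τ = (1-τ)·γ(α,λ) + τ·Y(τ,X,λ), where γ(α,λ) is an independent gamma random variable with shape α and rate λ, and Y(τ,X,λ) is obtained by first drawing x from the law of X, then drawing a Poisson random variable K with parameter xλτ/(1-τ), and finally (if K = k ≥ 1) drawing an independent gamma random variable with shape k and rate λτ/(1-τ) (and Y = 0 if K = 0). Then the Laplace transform of X_τ satisfies, for all μ > 0: E[exp(-μ X_τ)] = (1 + (μ/λ)(1-τ))^(-α) · E[exp(-μτX / (1 + (μ/λ)(1-τ)))]. -/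
open MeasureTheory ProbabilityTheory Real Set Filter Topology

noncomputable section

/-- Law of the Poisson–gamma mixture `Y(τ, X, λ)`: given `X = x`, draw
`K ~ Poisson(xλτ/(1-τ))`, then `Y ~ Gamma(K, λτ/(1-τ))` (`Y = 0` if `K = 0`). -/
def mixtureLaw (lam τ : ℝ) (μX : Measure ℝ) : Measure ℝ :=
  μX.bind fun x =>
    (poissonMeasure (Real.toNNReal (x * lam * τ / (1 - τ)))).bind fun k =>
      if k = 0 then Measure.dirac 0 else gammaMeasure k (lam * τ / (1 - τ))

/-- Law of the gamma smart path `X_τ = (1-τ)·γ(α,λ) + τ·Y(τ,X,λ)`, where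
`γ(α,λ)` is an independent Gamma(α,λ) random variable. -/
def smartLaw (α lam τ : ℝ) (μX : Measure ℝ) : Measure ℝ :=
  Measure.conv ((gammaMeasure α lam).map (fun y => (1 - τ) * y))
    ((mixtureLaw lam τ μX).map (fun y => τ * y))

/-- Laplace transform (in `ℝ≥0∞` form) of the gamma distribution. -/
lemma lap_gamma {a r : ℝ} (ha : 0 < a) (hr : 0 < r) {s : ℝ} (hs : 0 ≤ s) :
    ∫⁻ u, ENNReal.ofReal (Real.exp (-(s * u))) ∂(gammaMeasure a r)
      = ENNReal.ofReal ((r / (r + s)) ^ a) := by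
  have hrs : 0 < r + s := by linarith
  rw [gammaMeasure, lintegral_withDensity_eq_lintegral_mul _
    (f := gammaPDF a r) (measurable_gammaPDFReal a r).ennreal_ofReal (by fun_prop)]
  have key : ∀ x : ℝ, gammaPDF a r x * ENNReal.ofReal (Real.exp (-(s * x)))
      = ENNReal.ofReal ((r / (r + s)) ^ a) * gammaPDF a (r + s) x := by
    intro x
    rcases lt_or_ge x 0 with hx | hx
    · rw [gammaPDF_of_neg hx, gammaPDF_of_neg hx, zero_mul, mul_zero]
    · rw [gammaPDF_of_nonneg hx, gammaPDF_of_nonneg hx,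
        ← ENNReal.ofReal_mul (by positivity), ← ENNReal.ofReal_mul (by positivity)]
      congr 1
      have hexp : Real.exp (-(r * x)) * Real.exp (-(s * x)) = Real.exp (-((r + s) * x)) := by
        rw [← Real.exp_add]; ring_nf
      have hpow : (r / (r + s)) ^ a * (r + s) ^ a = r ^ a := by
        rw [Real.div_rpow hr.le hrs.le, div_mul_cancel₀]
        exact (Real.rpow_pos_of_pos hrs a).ne'
      calc r ^ a / Real.Gamma a * x ^ (a - 1) * Real.exp (-(r * x)) * Real.exp (-(s * x))
          = r ^ a / Real.Gamma a * x ^ (a - 1) * Real.exp (-((r + s) * x)) := by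
            rw [mul_assoc, hexp]
        _ = (r / (r + s)) ^ a * ((r + s) ^ a / Real.Gamma a * x ^ (a - 1)
              * Real.exp (-((r + s) * x))) := by rw [← hpow]; ring
  simp_rw [Pi.mul_apply, key]
  rw [lintegral_const_mul _
      (show Measurable (gammaPDF a (r + s)) from (measurable_gammaPDFReal _ _).ennreal_ofReal),
    lintegral_gammaPDF_eq_one ha hrs, mul_one]

/-- Laplace transform of the Poisson–gamma compound distribution. -/
lemma lap_pg {β : ℝ} (hβ : 0 < β) {s : ℝ} (hs : 0 ≤ s) (ρ : NNReal) :
    ∫⁻ u, ENNReal.ofReal (Real.exp (-(s * u)))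
        ∂((poissonMeasure ρ).bind fun k =>
            if k = 0 then Measure.dirac (0 : ℝ) else gammaMeasure k β)
      = ENNReal.ofReal (Real.exp (-((ρ : ℝ) * s / (β + s)))) := by
  have hβs : 0 < β + s := by linarith
  set c : ℝ := β / (β + s) with hc
  have hc0 : 0 ≤ c := by positivity
  rw [Measure.lintegral_bind Measurable.of_discrete.aemeasurable (by fun_prop)]
  have hterm : ∀ k : ℕ,
      (∫⁻ u, ENNReal.ofReal (Real.exp (-(s * u)))
        ∂(if k = 0 then Measure.dirac (0 : ℝ) else gammaMeasure k β))
      = ENNReal.ofReal (c ^ k) := by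
    intro k
    rcases Nat.eq_zero_or_pos k with hk | hk
    · subst hk; simp [lintegral_dirac]
    · rw [if_neg hk.ne',
        lap_gamma (by exact_mod_cast hk : (0:ℝ) < (k:ℝ)) hβ hs, ← hc,
        Real.rpow_natCast]
  simp_rw [hterm]
  rw [lintegral_countable']
  have hm : ∀ k : ℕ, poissonMeasure ρ {k} = ENNReal.ofReal (poissonPMFReal ρ k) := fun k =>
    poissonMeasure_singleton ρ k
  have hre : ∀ k : ℕ, c ^ k * poissonPMFReal ρ k
      = Real.exp (-(ρ:ℝ)) * (((ρ:ℝ) * c) ^ k / (Nat.factorial k)) := by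
    intro k
    rw [poissonPMFReal, mul_pow]
    ring
  have hsum : Summable fun k : ℕ => c ^ k * poissonPMFReal ρ k := by
    apply Summable.congr (((Real.summable_pow_div_factorial ((ρ:ℝ) * c)).mul_left
      (Real.exp (-(ρ:ℝ)))))
    intro k; rw [hre k]
  simp_rw [hm, fun k => (ENNReal.ofReal_mul (pow_nonneg hc0 k)).symm]
  rw [← ENNReal.ofReal_tsum_of_nonneg (fun k => mul_nonneg (pow_nonneg hc0 k) poissonPMFReal_nonneg) hsum]
  congr 1
  calc ∑' k : ℕ, c ^ k * poissonPMFReal ρ k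
      = ∑' k : ℕ, Real.exp (-(ρ:ℝ)) * (((ρ:ℝ) * c) ^ k / (Nat.factorial k)) := by
        exact tsum_congr hre
    _ = Real.exp (-(ρ:ℝ)) * ∑' k : ℕ, (((ρ:ℝ) * c) ^ k / (Nat.factorial k)) := tsum_mul_left
    _ = Real.exp (-(ρ:ℝ)) * Real.exp ((ρ:ℝ) * c) := by
        rw [Real.exp_eq_exp_ℝ, NormedSpace.exp_eq_tsum_div]
    _ = Real.exp (-(ρ:ℝ) + (ρ:ℝ) * c) := (Real.exp_add _ _).symm
    _ = Real.exp (-((ρ:ℝ) * s / (β + s))) := by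
        congr 1
        rw [hc]
        field_simp
        ring

lemma measurable_poissonMeasure : Measurable (poissonMeasure : NNReal → Measure ℕ) := by
  apply Measure.measurable_of_measurable_coe
  intro s hs
  have happ : ∀ r : NNReal, poissonMeasure r s = ∑' k, s.indicator (poissonPMF r) k :=
    fun r => by
      rw [show poissonMeasure r = (poissonPMF r).toMeasure from Measure.ext_of_singleton fun k => by
        rw [poissonMeasure_singleton, PMF.toMeasure_apply_singleton _ k (measurableSet_singleton k)]; rfl]
      exact (poissonPMF r).toMeasure_apply hs
  simp_rw [happ]
  apply Measurable.ennreal_tsum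
  intro k
  by_cases hk : k ∈ s
  · simp only [Set.indicator_of_mem hk]
    show Measurable fun r : NNReal => ENNReal.ofReal (poissonPMFReal r k)
    apply Measurable.ennreal_ofReal
    unfold poissonPMFReal
    fun_prop
  · simp [Set.indicator_of_notMem hk]

lemma measurable_mixKernel (lam τ : ℝ) :
    Measurable (fun x : ℝ =>
      (poissonMeasure (Real.toNNReal (x * lam * τ / (1 - τ)))).bind fun k =>
        if k = 0 then Measure.dirac (0:ℝ) else gammaMeasure k (lam * τ / (1 - τ))) :=
  (Measure.measurable_bind' Measurable.of_discrete).comp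
    (measurable_poissonMeasure.comp
      (measurable_real_toNNReal.comp (by fun_prop)))

lemma isProb_mixtureLaw (lam τ : ℝ) (hlam : 0 < lam) (hτ : τ ∈ Ioo (0:ℝ) 1)
    (μX : Measure ℝ) [IsProbabilityMeasure μX] :
    IsProbabilityMeasure (mixtureLaw lam τ μX) := by
  have h1τ : 0 < 1 - τ := by linarith [hτ.2]
  have hβ : 0 < lam * τ / (1 - τ) := by have := hτ.1; positivity
  constructor
  rw [mixtureLaw, Measure.bind_apply MeasurableSet.univ (measurable_mixKernel lam τ).aemeasurable]
  have hall : ∀ x : ℝ,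
      ((poissonMeasure (Real.toNNReal (x * lam * τ / (1 - τ)))).bind fun k =>
        if k = 0 then Measure.dirac (0:ℝ) else gammaMeasure k (lam * τ / (1 - τ)))
        Set.univ = 1 := by
    intro x
    rw [Measure.bind_apply MeasurableSet.univ Measurable.of_discrete.aemeasurable]
    have hk : ∀ k : ℕ,
        (if k = 0 then Measure.dirac (0:ℝ) else gammaMeasure k (lam * τ / (1 - τ)))
          Set.univ = 1 := by
      intro k
      rcases Nat.eq_zero_or_pos k with hk | hk
      · subst hk; simp
      · rw [if_neg hk.ne']
        haveI := isProbabilityMeasure_gammaMeasure (show (0:ℝ) < (k:ℝ) by exact_mod_cast hk) hβ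
        exact measure_univ
    simp_rw [hk]
    simp
  simp_rw [hall]
  simp

/-- Laplace transform of the gamma smart path. -/
theorem laplace_smartLaw (α lam τ : ℝ) (hα : 0 < α) (hlam : 0 < lam)
    (hτ : τ ∈ Ioo (0:ℝ) 1) (μX : Measure ℝ) [IsProbabilityMeasure μX]
    (hXpos : μX (Iic 0) = 0) (μ : ℝ) (hμ : 0 < μ) :
    ∫ u, Real.exp (-μ * u) ∂(smartLaw α lam τ μX)
      = (1 + (μ / lam) * (1 - τ)) ^ (-α) *
        ∫ x, Real.exp (-(μ * τ * x) / (1 + (μ / lam) * (1 - τ))) ∂μX := by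
  obtain ⟨hτ0, hτ1⟩ := hτ
  have h1τ : 0 < 1 - τ := by linarith
  have hβ : 0 < lam * τ / (1 - τ) := by positivity
  set D : ℝ := 1 + (μ / lam) * (1 - τ) with hD
  have hD0 : 0 < D := by positivity
  haveI hg : IsProbabilityMeasure (gammaMeasure α lam) := isProbabilityMeasure_gammaMeasure hα hlam
  haveI hm : IsProbabilityMeasure (mixtureLaw lam τ μX) :=
    isProb_mixtureLaw lam τ hlam ⟨hτ0, hτ1⟩ μX
  haveI h1 : IsProbabilityMeasure ((gammaMeasure α lam).map fun y => (1 - τ) * y) :=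
    Measure.isProbabilityMeasure_map (by fun_prop)
  haveI h2 : IsProbabilityMeasure ((mixtureLaw lam τ μX).map fun y => τ * y) :=
    Measure.isProbabilityMeasure_map (by fun_prop)
  have hae : ∀ᵐ x ∂μX, 0 < x := by
    have hset : {x : ℝ | ¬ 0 < x} = Iic 0 := by ext x; simp [not_lt]
    rw [ae_iff, hset]; exact hXpos
  have hint : Integrable (fun x => Real.exp (-(μ * τ * x) / D)) μX := by
    apply Integrable.mono' (integrable_const 1)
      (Continuous.aestronglyMeasurable (by fun_prop))
    filter_upwards [hae] with x hx
    rw [Real.norm_eq_abs, abs_of_pos (Real.exp_pos _)]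
    have hnum : -(μ * τ * x) ≤ 0 := by nlinarith [mul_pos (mul_pos hμ hτ0) hx]
    calc Real.exp (-(μ * τ * x) / D) ≤ Real.exp 0 :=
          Real.exp_le_exp.mpr (by rw [div_nonpos_iff]; exact Or.inr ⟨hnum, hD0.le⟩)
      _ = 1 := Real.exp_zero
  rw [integral_eq_lintegral_of_nonneg_ae
    (Filter.Eventually.of_forall fun u => (Real.exp_pos _).le)
    (Continuous.aestronglyMeasurable (by fun_prop))]
  have key : ∫⁻ u, ENNReal.ofReal (Real.exp (-μ * u)) ∂(smartLaw α lam τ μX)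
      = ENNReal.ofReal (D ^ (-α)) *
        ENNReal.ofReal (∫ x, Real.exp (-(μ * τ * x) / D) ∂μX) := by
    rw [smartLaw, Measure.conv, lintegral_map (by fun_prop) measurable_add,
      lintegral_prod _ (by fun_prop)]
    have hsplit : ∀ x y : ℝ, ENNReal.ofReal (Real.exp (-μ * (x + y)))
        = ENNReal.ofReal (Real.exp (-μ * x)) * ENNReal.ofReal (Real.exp (-μ * y)) := by
      intro x y
      rw [← ENNReal.ofReal_mul (Real.exp_pos _).le, ← Real.exp_add]
      ring_nf
    simp_rw [hsplit]
    rw [lintegral_lintegral_mul (by fun_prop) (by fun_prop)]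
    have hfac1 : ∫⁻ x, ENNReal.ofReal (Real.exp (-μ * x))
          ∂((gammaMeasure α lam).map fun y => (1 - τ) * y)
        = ENNReal.ofReal (D ^ (-α)) := by
      rw [lintegral_map (by fun_prop) (measurable_const_mul _)]
      simp_rw [show ∀ y : ℝ, -μ * ((1 - τ) * y) = -((μ * (1 - τ)) * y) from fun y => by ring]
      rw [lap_gamma hα hlam (by positivity)]
      congr 1
      have hbase : lam / (lam + μ * (1 - τ)) = D⁻¹ := by
        rw [hD]; field_simp
      rw [hbase, Real.inv_rpow hD0.le, ← Real.rpow_neg hD0.le]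
    have hfac2 : ∫⁻ y, ENNReal.ofReal (Real.exp (-μ * y))
          ∂((mixtureLaw lam τ μX).map fun y => τ * y)
        = ENNReal.ofReal (∫ x, Real.exp (-(μ * τ * x) / D) ∂μX) := by
      rw [lintegral_map (by fun_prop) (measurable_const_mul _)]
      simp_rw [show ∀ y : ℝ, -μ * (τ * y) = -((μ * τ) * y) from fun y => by ring]
      rw [mixtureLaw, Measure.lintegral_bind (measurable_mixKernel lam τ).aemeasurable (by fun_prop)]
      have hpt : ∀ᵐ x ∂μX,
          (∫⁻ u, ENNReal.ofReal (Real.exp (-((μ * τ) * u)))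
            ∂((poissonMeasure (Real.toNNReal (x * lam * τ / (1 - τ)))).bind fun k =>
              if k = 0 then Measure.dirac (0:ℝ) else gammaMeasure k (lam * τ / (1 - τ))))
          = ENNReal.ofReal (Real.exp (-(μ * τ * x) / D)) := by
        filter_upwards [hae] with x hx
        rw [lap_pg hβ (by positivity) _]
        congr 1
        rw [Real.coe_toNNReal _ (by positivity)]
        rw [hD]
        field_simp
      rw [lintegral_congr_ae hpt,
        ← ofReal_integral_eq_lintegral_ofReal hint
          (Filter.Eventually.of_forall fun x => (Real.exp_pos _).le)]
    rw [hfac1, hfac2]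
  rw [key, ENNReal.toReal_mul, ENNReal.toReal_ofReal (by positivity),
    ENNReal.toReal_ofReal (integral_nonneg fun x => (Real.exp_pos _).le)]
end
end

section
/- With X_τ defined as the gamma smart path of a strictly positive random variable X (with parameters α, λ > 0), X_τ converges in distribution to γ(α,λ) as τ → 0⁺, and X_τ converges in distribution to X as τ → 1⁻. -/
open MeasureTheory ProbabilityTheory Real Set Filter Topology
open scoped ENNReal NNReal

noncomputable section



namespace SmartPathAux

lemma psum1 (r : ℝ≥0) : HasSum (fun k : ℕ => poissonPMFReal r k * k) r := by
  rw [← hasSum_nat_add_iff' 1]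
  have h0 := (poissonPMFRealSum r).mul_left (r : ℝ)
  simp only [Finset.range_one, Finset.sum_singleton, Nat.cast_zero, mul_zero, sub_zero, mul_one] at h0 ⊢
  convert h0 using 2 with n
  · rfl
  unfold poissonPMFReal
  rw [Nat.factorial_succ]
  push_cast
  have hn : ((n:ℝ) + 1) ≠ 0 := by positivity
  have hf : ((Nat.factorial n : ℝ)) ≠ 0 := by positivity
  field_simp
  ring

lemma psum2 (r : ℝ≥0) :
    HasSum (fun k : ℕ => poissonPMFReal r k * (k * (k + 1))) ((r:ℝ)^2 + 2*r) := by
  rw [← hasSum_nat_add_iff' 1]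
  have h1 := (psum1 r).mul_left (r : ℝ)
  have h0 := (poissonPMFRealSum r).mul_left (2 * (r : ℝ))
  have h := h1.add h0
  simp only [Finset.range_one, Finset.sum_singleton, Nat.cast_zero, zero_mul, mul_zero, sub_zero,
    mul_one] at h ⊢
  convert h using 2 with n
  · rfl
  · unfold poissonPMFReal
    rw [Nat.factorial_succ]
    push_cast
    have hn : ((n:ℝ) + 1) ≠ 0 := by positivity
    have hf : ((Nat.factorial n : ℝ)) ≠ 0 := by positivity
    field_simp
    ring
  · ring


lemma integrableOn_rpow_exp {c r : ℝ} (hc : 0 < c) (hr : 0 < r) :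
    IntegrableOn (fun y : ℝ => y ^ (c - 1) * exp (-(r * y))) (Ioi (0:ℝ)) := by
  have h := Real.GammaIntegral_convergent hc
  have h2 : IntegrableOn (fun x : ℝ => exp (-(r * x)) * (r * x) ^ (c - 1)) (Ioi (0:ℝ)) := by
    have := (integrableOn_Ioi_comp_mul_left_iff (fun x => exp (-x) * x ^ (c - 1)) 0 hr).mpr
      (by simpa using h)
    simpa using this
  have h3 := h2.const_mul (r ^ (-(c - 1)))
  refine IntegrableOn.congr_fun h3 (fun x hx => ?_) measurableSet_Ioi
  have hx0 : (0:ℝ) < x := hx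
  rw [Real.mul_rpow hr.le hx0.le, Real.rpow_neg hr.le]
  field_simp

lemma gammaMeasure_integrable_pow {a r : ℝ} (ha : 0 < a) (hr : 0 < r) (n : ℕ) :
    Integrable (fun y : ℝ => y ^ n) (gammaMeasure a r) ∧
      ∫ y, (y:ℝ) ^ n ∂gammaMeasure a r = Gamma (a + n) / (Gamma a * r ^ n) := by
  have hpdfm : Measurable fun y => Real.toNNReal (gammaPDFReal a r y) :=
    (measurable_gammaPDFReal a r).real_toNNReal
  have hd : gammaMeasure a r
      = volume.withDensity (fun y => ((Real.toNNReal (gammaPDFReal a r y) : ℝ≥0) : ℝ≥0∞)) := rfl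
  -- the real-side integrand
  set G : ℝ → ℝ := fun y => gammaPDFReal a r y * y ^ n with hG
  have key : ∀ y, ((gammaPDFReal a r y).toNNReal : ℝ) = gammaPDFReal a r y :=
    fun y => Real.coe_toNNReal _ (gammaPDFReal_nonneg ha hr y)
  -- a.e. equality with an indicator
  have hae : G =ᵐ[volume] (Ioi (0:ℝ)).indicator
      (fun y => (r ^ a / Gamma a) * (y ^ ((a + n) - 1) * exp (-(r * y)))) := by
    have h0 : ∀ᵐ y : ℝ ∂volume, y ≠ 0 := by
      refine ae_iff.mpr ?_
      simp [show {y : ℝ | ¬ y ≠ 0} = {0} by ext y; simp]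
    filter_upwards [h0] with y hy
    rcases lt_trichotomy y 0 with h | h | h
    · simp [hG, gammaPDFReal, not_le.mpr h, indicator_of_notMem (by simp [h.not_gt] : y ∉ Ioi (0:ℝ))]
    · exact absurd h hy
    · rw [indicator_of_mem (mem_Ioi.mpr h)]
      simp only [hG, gammaPDFReal, if_pos h.le]
      rw [show (a + n) - 1 = (a - 1) + (n : ℝ) by ring, Real.rpow_add h,
        Real.rpow_natCast]
      ring
  have hint : IntegrableOn
      (fun y : ℝ => (r ^ a / Gamma a) * (y ^ ((a + n) - 1) * exp (-(r * y)))) (Ioi (0:ℝ)) :=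
    (integrableOn_rpow_exp (by positivity) hr).const_mul _
  have hGint : Integrable G volume := by
    rw [integrable_congr hae]
    exact (integrable_indicator_iff measurableSet_Ioi).mpr hint
  constructor
  · rw [hd]
    rw [integrable_withDensity_iff_integrable_coe_smul hpdfm]
    simpa only [smul_eq_mul, key] using hGint
  · rw [hd, integral_withDensity_eq_integral_smul hpdfm]
    simp only [NNReal.smul_def, key, smul_eq_mul]
    rw [show (fun y => gammaPDFReal a r y * y ^ n) = G from rfl]
    rw [integral_congr_ae hae,
      integral_indicator measurableSet_Ioi, integral_const_mul,
      integral_rpow_mul_exp_neg_mul_Ioi (by positivity : (0:ℝ) < a + n) hr]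
    have h1 : (1/r) ^ (a + (n:ℝ)) = (r ^ (a + (n:ℝ)))⁻¹ := by
      rw [one_div, Real.inv_rpow hr.le]
    have h2 : r ^ a * (r ^ (a + (n:ℝ)))⁻¹ = ((r:ℝ) ^ n)⁻¹ := by
      rw [Real.rpow_add hr, mul_inv, ← mul_assoc, mul_inv_cancel₀ (by positivity), one_mul,
        Real.rpow_natCast]
    rw [h1, show r ^ a / Gamma a * ((r ^ (a + (n:ℝ)))⁻¹ * Gamma (a + n))
        = (r ^ a * (r ^ (a + (n:ℝ)))⁻¹) * Gamma (a + n) / Gamma a by ring, h2]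
    have hGa : Gamma a ≠ 0 := (Gamma_pos_of_pos ha).ne'
    have hrn : (r:ℝ) ^ n ≠ 0 := by positivity
    field_simp

end SmartPathAux

namespace SmartPathAux2
open SmartPathAux

lemma gammaMeasure_Iio_zero (a r : ℝ) : gammaMeasure a r (Iio 0) = 0 := by
  rw [gammaMeasure, withDensity_apply _ measurableSet_Iio]
  exact lintegral_gammaPDF_of_nonpos le_rfl

lemma gammaMeasure_ae_nonneg {a r : ℝ} : ∀ᵐ y ∂(gammaMeasure a r), 0 ≤ y := by
  refine ae_iff.mpr ?_
  rw [show {y : ℝ | ¬ 0 ≤ y} = Iio 0 by ext y; simp]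
  exact gammaMeasure_Iio_zero a r

lemma gamma_nat_int1 {k : ℕ} (hk : k ≠ 0) {b : ℝ} (hb : 0 < b) :
    Integrable (fun y : ℝ => y) (gammaMeasure (k:ℝ) b) ∧
      ∫ y, y ∂gammaMeasure (k:ℝ) b = k / b := by
  have hk0 : (0:ℝ) < (k:ℝ) := by exact_mod_cast Nat.pos_of_ne_zero hk
  obtain ⟨h1, h2⟩ := gammaMeasure_integrable_pow hk0 hb 1
  simp only [pow_one] at h1 h2
  refine ⟨h1, ?_⟩
  rw [h2, Nat.cast_one, Real.Gamma_add_one hk0.ne']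
  have hG : Real.Gamma (k:ℝ) ≠ 0 := (Real.Gamma_pos_of_pos hk0).ne'
  field_simp

lemma gamma_nat_int2 {k : ℕ} (hk : k ≠ 0) {b : ℝ} (hb : 0 < b) :
    Integrable (fun y : ℝ => y ^ 2) (gammaMeasure (k:ℝ) b) ∧
      ∫ y, y ^ 2 ∂gammaMeasure (k:ℝ) b = (k * (k + 1)) / b ^ 2 := by
  have hk0 : (0:ℝ) < (k:ℝ) := by exact_mod_cast Nat.pos_of_ne_zero hk
  obtain ⟨h1, h2⟩ := gammaMeasure_integrable_pow hk0 hb 2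
  refine ⟨h1, ?_⟩
  rw [h2]
  have hG2 : Real.Gamma ((k:ℝ) + 2) = ((k:ℝ) + 1) * (k:ℝ) * Real.Gamma (k:ℝ) := by
    rw [show ((k:ℝ) + 2) = ((k:ℝ) + 1) + 1 by ring, Real.Gamma_add_one (by positivity),
      Real.Gamma_add_one hk0.ne']
    ring
  rw [show ((2:ℕ):ℝ) = 2 by norm_num, hG2]
  have hG : Real.Gamma (k:ℝ) ≠ 0 := (Real.Gamma_pos_of_pos hk0).ne'
  field_simp

lemma gamma_nat_var {k : ℕ} (hk : k ≠ 0) {b : ℝ} (hb : 0 < b) (x : ℝ) :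
    Integrable (fun y : ℝ => (y - x) ^ 2) (gammaMeasure (k:ℝ) b) ∧
      ∫ y, (y - x) ^ 2 ∂gammaMeasure (k:ℝ) b
        = (k * (k + 1)) / b ^ 2 - 2 * x * ((k:ℝ) / b) + x ^ 2 := by
  have hk0 : (0:ℝ) < (k:ℝ) := by exact_mod_cast Nat.pos_of_ne_zero hk
  haveI : IsProbabilityMeasure (gammaMeasure (k:ℝ) b) := isProbabilityMeasure_gammaMeasure hk0 hb
  obtain ⟨i1, e1⟩ := gamma_nat_int1 hk hb
  obtain ⟨i2, e2⟩ := gamma_nat_int2 hk hb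
  have hfun : (fun y : ℝ => (y - x) ^ 2)
      = fun y : ℝ => (y ^ 2 - (2 * x) * y) + x ^ 2 := by funext y; ring
  have isub : Integrable (fun y : ℝ => y ^ 2 - 2 * x * y) (gammaMeasure (k:ℝ) b) := by
    have := i2.sub (i1.const_mul (2 * x)); simpa [Pi.sub_def] using this
  have hint : Integrable (fun y : ℝ => (y - x) ^ 2) (gammaMeasure (k:ℝ) b) := by
    rw [hfun]
    have := isub.add (integrable_const (x ^ 2)); simpa using this
  refine ⟨hint, ?_⟩
  rw [hfun, integral_add isub (integrable_const _),
    integral_sub i2 (i1.const_mul _), MeasureTheory.integral_const_mul, e1, e2, integral_const]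
  simp [measure_univ]

lemma gamma_nat_lint1 {k : ℕ} (hk : k ≠ 0) {b : ℝ} (hb : 0 < b) :
    ∫⁻ y, ENNReal.ofReal y ∂gammaMeasure (k:ℝ) b = ENNReal.ofReal ((k:ℝ) / b) := by
  obtain ⟨i1, e1⟩ := gamma_nat_int1 hk hb
  rw [← e1]
  exact (ofReal_integral_eq_lintegral_ofReal i1 gammaMeasure_ae_nonneg).symm

lemma gamma_nat_lintvar {k : ℕ} (hk : k ≠ 0) {b : ℝ} (hb : 0 < b) (x : ℝ) :
    ∫⁻ y, ENNReal.ofReal ((y - x) ^ 2) ∂gammaMeasure (k:ℝ) b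
      = ENNReal.ofReal ((k * (k + 1)) / b ^ 2 - 2 * x * ((k:ℝ) / b) + x ^ 2) := by
  obtain ⟨i, e⟩ := gamma_nat_var hk hb x
  rw [← e]
  exact (ofReal_integral_eq_lintegral_ofReal i (ae_of_all _ fun y => sq_nonneg _)).symm

end SmartPathAux2

namespace SmartPathAux3
open SmartPathAux SmartPathAux2

/-- the inner kernel: gamma with natural shape -/
def pker (b : ℝ) : ℕ → Measure ℝ :=
  fun k => if k = 0 then Measure.dirac 0 else gammaMeasure k b

/-- the Poisson–gamma mixture kernel -/
def nuK (lam τ : ℝ) (x : ℝ) : Measure ℝ :=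
  (poissonMeasure (Real.toNNReal (x * lam * τ / (1 - τ)))).bind (pker (lam * τ / (1 - τ)))

lemma pker_prob {b : ℝ} (hb : 0 < b) (k : ℕ) : IsProbabilityMeasure (pker b k) := by
  unfold pker
  split_ifs with h
  · infer_instance
  · exact isProbabilityMeasure_gammaMeasure (by exact_mod_cast Nat.pos_of_ne_zero h) hb

lemma pker_univ {b : ℝ} (hb : 0 < b) (k : ℕ) : pker b k Set.univ = 1 :=
  (pker_prob hb k).measure_univ

lemma nuK_prob {lam τ : ℝ} (hlam : 0 < lam) (hτ : τ ∈ Ioo (0:ℝ) 1) (x : ℝ) :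
    IsProbabilityMeasure (nuK lam τ x) := by
  have hb : 0 < lam * τ / (1 - τ) := by
    have := hτ.1; have := hτ.2
    apply div_pos (by positivity) (by linarith)
  constructor
  rw [nuK, Measure.bind_apply MeasurableSet.univ measurable_from_top.aemeasurable]
  rw [lintegral_congr (fun k => pker_univ hb k)]
  simp

lemma nuK_meas (lam τ : ℝ) : Measurable (nuK lam τ) := by
  apply Measure.measurable_of_measurable_coe
  intro s hs
  have hrw : ∀ x : ℝ, nuK lam τ x s
      = ∑' k : ℕ, pker (lam * τ / (1 - τ)) k s
          * ENNReal.ofReal (poissonPMFReal (Real.toNNReal (x * lam * τ / (1 - τ))) k) := by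
    intro x
    rw [nuK, Measure.bind_apply hs measurable_from_top.aemeasurable, lintegral_countable']
    refine tsum_congr fun k => ?_
    rw [poissonMeasure_singleton]
    rfl
  simp only [hrw]
  refine Measurable.ennreal_tsum fun k => ?_
  refine Measurable.const_mul ?_ _
  apply Measurable.ennreal_ofReal
  have hc : Continuous fun x : ℝ => ((Real.toNNReal (x * lam * τ / (1 - τ))) : ℝ) :=
    NNReal.continuous_coe.comp (continuous_real_toNNReal.comp (by fun_prop))
  have : Continuous fun x : ℝ =>
      poissonPMFReal (Real.toNNReal (x * lam * τ / (1 - τ))) k := by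
    unfold poissonPMFReal
    exact ((Real.continuous_exp.comp hc.neg).mul (hc.pow k)).div_const _
  exact this.measurable

lemma nuK_Iio {lam τ : ℝ} (x : ℝ) : nuK lam τ x (Iio 0) = 0 := by
  rw [nuK, Measure.bind_apply measurableSet_Iio measurable_from_top.aemeasurable]
  have : ∀ k : ℕ, pker (lam * τ / (1 - τ)) k (Iio 0) = 0 := by
    intro k
    unfold pker
    split_ifs with h
    · rw [Measure.dirac_apply' _ measurableSet_Iio]
      simp
    · exact gammaMeasure_Iio_zero _ _
  rw [lintegral_congr this]
  simp

lemma nuK_ae_nonneg {lam τ : ℝ} (x : ℝ) : ∀ᵐ y ∂(nuK lam τ x), 0 ≤ y := by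
  refine ae_iff.mpr ?_
  rw [show {y : ℝ | ¬ 0 ≤ y} = Iio 0 by ext y; simp]
  exact nuK_Iio x

lemma poisson_lint (m : ℝ≥0) (J : ℕ → ℝ≥0∞) :
    ∫⁻ k, J k ∂poissonMeasure m = ∑' k, J k * ENNReal.ofReal (poissonPMFReal m k) := by
  rw [lintegral_countable']
  refine tsum_congr fun k => ?_
  rw [poissonMeasure_singleton]
  rfl

lemma nuK_lint1 {lam τ : ℝ} (hlam : 0 < lam) (hτ : τ ∈ Ioo (0:ℝ) 1) {x : ℝ} (hx : 0 ≤ x) :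
    ∫⁻ y, ENNReal.ofReal y ∂(nuK lam τ x) = ENNReal.ofReal x := by
  have h1 : (0:ℝ) < 1 - τ := by linarith [hτ.2]
  have hb : 0 < lam * τ / (1 - τ) := div_pos (by have := hτ.1; positivity) h1
  set b := lam * τ / (1 - τ) with hbdef
  set m := Real.toNNReal (x * lam * τ / (1 - τ)) with hmdef
  have hm : (m:ℝ) = x * b := by
    rw [hmdef, Real.coe_toNNReal _
      (div_nonneg (mul_nonneg (mul_nonneg hx hlam.le) hτ.1.le) h1.le), hbdef]
    rw [mul_assoc, mul_div_assoc]
  have hJ : ∀ k : ℕ, ∫⁻ y, ENNReal.ofReal y ∂(pker b k) = ENNReal.ofReal ((k:ℝ) / b) := by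
    intro k
    unfold pker
    split_ifs with h
    · rw [lintegral_dirac]
      simp [h]
    · exact gamma_nat_lint1 h hb
  rw [nuK, Measure.lintegral_bind measurable_from_top.aemeasurable measurable_id'.ennreal_ofReal.aemeasurable]
  rw [lintegral_congr hJ, poisson_lint]
  have hterm : ∀ k : ℕ, ENNReal.ofReal ((k:ℝ) / b) * ENNReal.ofReal (poissonPMFReal m k)
      = ENNReal.ofReal (poissonPMFReal m k * k / b) := by
    intro k
    rw [← ENNReal.ofReal_mul (by positivity)]
    congr 1
    ring
  simp only [← hmdef, ← hbdef, hterm]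
  have hsum : HasSum (fun k : ℕ => poissonPMFReal m k * k / b) ((m:ℝ) / b) := (psum1 m).div_const b
  rw [← ENNReal.ofReal_tsum_of_nonneg (fun k => div_nonneg (mul_nonneg poissonPMFReal_nonneg (Nat.cast_nonneg k)) hb.le) hsum.summable, hsum.tsum_eq]
  congr 1
  rw [hm]
  field_simp

lemma nuK_lintvar {lam τ : ℝ} (hlam : 0 < lam) (hτ : τ ∈ Ioo (0:ℝ) 1) {x : ℝ} (hx : 0 ≤ x) :
    ∫⁻ y, ENNReal.ofReal ((y - x) ^ 2) ∂(nuK lam τ x)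
      = ENNReal.ofReal (2 * x / (lam * τ / (1 - τ))) := by
  have h1 : (0:ℝ) < 1 - τ := by linarith [hτ.2]
  have hb : 0 < lam * τ / (1 - τ) := div_pos (by have := hτ.1; positivity) h1
  set b := lam * τ / (1 - τ) with hbdef
  set m := Real.toNNReal (x * lam * τ / (1 - τ)) with hmdef
  have hm : (m:ℝ) = x * b := by
    rw [hmdef, Real.coe_toNNReal _
      (div_nonneg (mul_nonneg (mul_nonneg hx hlam.le) hτ.1.le) h1.le), hbdef]
    rw [mul_assoc, mul_div_assoc]
  set v : ℕ → ℝ := fun k => (k * (k + 1)) / b ^ 2 - 2 * x * ((k:ℝ) / b) + x ^ 2 with hv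
  have hvnn : ∀ k : ℕ, 0 ≤ v k := by
    intro k
    have h2 : v k = (k:ℝ) / b ^ 2 + ((k:ℝ) / b - x) ^ 2 := by
      rw [hv]; field_simp; ring
    rw [h2]
    positivity
  have hJ : ∀ k : ℕ, ∫⁻ y, ENNReal.ofReal ((y - x) ^ 2) ∂(pker b k) = ENNReal.ofReal (v k) := by
    intro k
    unfold pker
    split_ifs with h
    · rw [lintegral_dirac]
      rw [hv]
      norm_num [h]
    · exact gamma_nat_lintvar h hb x
  rw [nuK, Measure.lintegral_bind measurable_from_top.aemeasurable
    ((measurable_id'.sub_const x).pow_const 2).ennreal_ofReal.aemeasurable]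
  rw [lintegral_congr hJ, poisson_lint]
  have hterm : ∀ k : ℕ, ENNReal.ofReal (v k) * ENNReal.ofReal (poissonPMFReal m k)
      = ENNReal.ofReal (poissonPMFReal m k * v k) := by
    intro k
    rw [← ENNReal.ofReal_mul (hvnn k)]
    congr 1
    ring
  simp only [← hmdef, ← hbdef, hterm]
  have hsum : HasSum (fun k : ℕ => poissonPMFReal m k * v k) (2 * x / b) := by
    have h2 := (psum2 m).div_const (b ^ 2)
    have hA := (psum1 m).mul_left (2 * x / b)
    have h0 := (poissonPMFRealSum m).mul_left (x ^ 2)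
    have hcomb := (h2.sub hA).add h0
    have hfn : (fun k : ℕ => poissonPMFReal m k * v k)
        = fun k : ℕ => (poissonPMFReal m k * ((k:ℝ) * (k + 1)) / b ^ 2
            - 2 * x / b * (poissonPMFReal m k * k)) + x ^ 2 * poissonPMFReal m k := by
      funext k
      rw [hv]
      field_simp
    rw [hfn]
    convert hcomb using 1
    · rfl
    · rfl
    rw [hm]
    field_simp
    ring
  rw [← ENNReal.ofReal_tsum_of_nonneg (fun k => mul_nonneg poissonPMFReal_nonneg (hvnn k))
    hsum.summable, hsum.tsum_eq]

end SmartPathAux3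

namespace SmartPathAux4
open SmartPathAux SmartPathAux2 SmartPathAux3

lemma meas_ge_le_of_lintegral {μ : Measure ℝ} {h : ℝ → ℝ} {c d : ℝ}
    (hc : 0 ≤ c) (hd : 0 < d) (hm : AEMeasurable h μ)
    (hint : ∫⁻ y, ENNReal.ofReal (h y) ∂μ = ENNReal.ofReal c) :
    (μ {y | d ≤ h y}).toReal ≤ c / d := by
  have h1 : ENNReal.ofReal d * μ {y | ENNReal.ofReal d ≤ ENNReal.ofReal (h y)}
      ≤ ENNReal.ofReal c := by
    rw [← hint]
    exact mul_meas_ge_le_lintegral₀ hm.ennreal_ofReal _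
  have hsub : μ {y | d ≤ h y} ≤ μ {y | ENNReal.ofReal d ≤ ENNReal.ofReal (h y)} :=
    measure_mono (fun y hy => ENNReal.ofReal_le_ofReal hy)
  have h2 : ENNReal.ofReal d * μ {y | d ≤ h y} ≤ ENNReal.ofReal c :=
    le_trans (mul_le_mul_right hsub _) h1
  have h3 : μ {y | d ≤ h y} ≤ ENNReal.ofReal c / ENNReal.ofReal d := by
    rw [ENNReal.le_div_iff_mul_le (Or.inl (by simp [hd])) (Or.inl ENNReal.ofReal_ne_top)]
    rwa [mul_comm]
  have h4 : (μ {y | d ≤ h y}).toReal ≤ (ENNReal.ofReal c / ENNReal.ofReal d).toReal := by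
    refine ENNReal.toReal_mono ?_ h3
    rw [← ENNReal.ofReal_div_of_pos hd]
    exact ENNReal.ofReal_ne_top
  rwa [← ENNReal.ofReal_div_of_pos hd, ENNReal.toReal_ofReal (by positivity)] at h4

variable {α β : Type*} [MeasurableSpace α] [MeasurableSpace β]

lemma integrable_of_bounded {μ : Measure β} [IsFiniteMeasure μ] {f : β → ℝ} (hf : Measurable f)
    {C : ℝ} (hC : ∀ y, |f y| ≤ C) : Integrable f μ :=
  ⟨hf.aestronglyMeasurable,
    HasFiniteIntegral.of_bounded (C := C) (ae_of_all _ (fun y => by simpa using hC y))⟩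

lemma lint_ofReal_le {μ : Measure β} [IsProbabilityMeasure μ] {f : β → ℝ} {C : ℝ}
    (hC : ∀ y, |f y| ≤ C) : ∫⁻ y, ENNReal.ofReal (f y) ∂μ ≤ ENNReal.ofReal C := by
  calc ∫⁻ y, ENNReal.ofReal (f y) ∂μ ≤ ∫⁻ _, ENNReal.ofReal C ∂μ :=
        lintegral_mono fun y => ENNReal.ofReal_le_ofReal ((le_abs_self _).trans (hC y))
  _ = ENNReal.ofReal C := by simp

lemma bind_prob (μ : Measure α) [IsProbabilityMeasure μ]
    (κ : α → Measure β) (hκ : Measurable κ) (hp : ∀ a, IsProbabilityMeasure (κ a)) :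
    IsProbabilityMeasure (μ.bind κ) := by
  constructor
  rw [Measure.bind_apply MeasurableSet.univ hκ.aemeasurable,
    lintegral_congr (fun a => (hp a).measure_univ)]
  simp

lemma measurable_integral_kernel (κ : α → Measure β) (hκ : Measurable κ)
    (hp : ∀ a, IsProbabilityMeasure (κ a)) (f : β → ℝ) (hf : Measurable f)
    (C : ℝ) (hC : ∀ y, |f y| ≤ C) :
    Measurable fun a => ∫ y, f y ∂(κ a) := by
  have hrw : (fun a => ∫ y, f y ∂κ a) = fun a =>
      (∫⁻ y, ENNReal.ofReal (f y) ∂κ a).toReal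
        - (∫⁻ y, ENNReal.ofReal (-f y) ∂κ a).toReal := by
    funext a
    haveI := hp a
    exact integral_eq_lintegral_pos_part_sub_lintegral_neg_part (integrable_of_bounded hf hC)
  rw [hrw]
  exact (((Measure.measurable_lintegral hf.ennreal_ofReal).comp hκ).ennreal_toReal).sub
    (((Measure.measurable_lintegral hf.neg.ennreal_ofReal).comp hκ).ennreal_toReal)

lemma integral_bind_of_bounded (μ : Measure α) [IsProbabilityMeasure μ]
    (κ : α → Measure β) (hκ : Measurable κ) (hp : ∀ a, IsProbabilityMeasure (κ a))
    (f : β → ℝ) (hf : Measurable f) (C : ℝ) (hC0 : 0 ≤ C) (hC : ∀ y, |f y| ≤ C) :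
    ∫ y, f y ∂(μ.bind κ) = ∫ a, ∫ y, f y ∂(κ a) ∂μ := by
  haveI : IsProbabilityMeasure (μ.bind κ) := bind_prob μ κ hκ hp
  have hfi : Integrable f (μ.bind κ) := integrable_of_bounded hf hC
  set A : α → ℝ≥0∞ := fun a => ∫⁻ y, ENNReal.ofReal (f y) ∂κ a with hA
  set B : α → ℝ≥0∞ := fun a => ∫⁻ y, ENNReal.ofReal (-f y) ∂κ a with hB
  have hAm : Measurable A := (Measure.measurable_lintegral hf.ennreal_ofReal).comp hκ
  have hBm : Measurable B := (Measure.measurable_lintegral hf.neg.ennreal_ofReal).comp hκ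
  have hAle : ∀ a, A a ≤ ENNReal.ofReal C := fun a => by
    haveI := hp a; exact lint_ofReal_le hC
  have hBle : ∀ a, B a ≤ ENNReal.ofReal C := fun a => by
    haveI := hp a; exact lint_ofReal_le (fun y => by rw [abs_neg]; exact hC y)
  have hrw : ∀ a, ∫ y, f y ∂κ a = (A a).toReal - (B a).toReal := fun a => by
    haveI := hp a
    exact integral_eq_lintegral_pos_part_sub_lintegral_neg_part (integrable_of_bounded hf hC)
  have hAint : Integrable (fun a => (A a).toReal) μ :=
    integrable_of_bounded hAm.ennreal_toReal (C := C) (fun a => by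
      rw [abs_of_nonneg ENNReal.toReal_nonneg]
      exact ENNReal.toReal_le_of_le_ofReal hC0 (hAle a))
  have hBint : Integrable (fun a => (B a).toReal) μ :=
    integrable_of_bounded hBm.ennreal_toReal (C := C) (fun a => by
      rw [abs_of_nonneg ENNReal.toReal_nonneg]
      exact ENNReal.toReal_le_of_le_ofReal hC0 (hBle a))
  rw [integral_eq_lintegral_pos_part_sub_lintegral_neg_part hfi,
    Measure.lintegral_bind hκ.aemeasurable hf.ennreal_ofReal.aemeasurable, Measure.lintegral_bind (f := fun y => ENNReal.ofReal (-f y)) hκ.aemeasurable hf.neg.ennreal_ofReal.aemeasurable]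
  simp only [hrw]
  rw [integral_sub hAint hBint,
    integral_toReal hAm.aemeasurable
      (ae_of_all _ fun a => lt_of_le_of_lt (hAle a) ENNReal.ofReal_lt_top),
    integral_toReal hBm.aemeasurable
      (ae_of_all _ fun a => lt_of_le_of_lt (hBle a) ENNReal.ofReal_lt_top)]

end SmartPathAux4

namespace SmartPathAux5
open SmartPathAux SmartPathAux2 SmartPathAux3 SmartPathAux4

lemma nuK_markov1 {lam τ : ℝ} (hlam : 0 < lam) (hτ : τ ∈ Ioo (0:ℝ) 1) {x : ℝ} (hx : 0 ≤ x)
    {d : ℝ} (hd : 0 < d) : ((nuK lam τ x) {y | d ≤ y}).toReal ≤ x / d :=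
  meas_ge_le_of_lintegral hx hd aemeasurable_id (nuK_lint1 hlam hτ hx)

lemma nuK_markov2 {lam τ : ℝ} (hlam : 0 < lam) (hτ : τ ∈ Ioo (0:ℝ) 1) {x : ℝ} (hx : 0 ≤ x)
    {d : ℝ} (hd : 0 < d) :
    ((nuK lam τ x) {y | d ≤ (y - x) ^ 2}).toReal ≤ (2 * x / (lam * τ / (1 - τ))) / d := by
  have hb : 0 < lam * τ / (1 - τ) :=
    div_pos (by have := hτ.1; positivity) (by linarith [hτ.2])
  exact meas_ge_le_of_lintegral (by positivity) hd
    ((measurable_id'.sub_const x).pow_const 2).aemeasurable (nuK_lintvar hlam hτ hx)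

lemma est {ν : Measure ℝ} [IsProbabilityMeasure ν] (f : BoundedContinuousFunction ℝ ℝ)
    {h : ℝ → ℝ} (hh : Measurable h) (t : ℝ) {S : Set ℝ} (hSm : MeasurableSet S) {ε2 : ℝ}
    (hae : ∀ᵐ y ∂ν, |f (h y) - t| ≤ ε2 + 2 * ‖f‖ * S.indicator (fun _ => (1:ℝ)) y) :
    |(∫ y, f (h y) ∂ν) - t| ≤ ε2 + 2 * ‖f‖ * (ν S).toReal := by
  have hfb : ∀ y, |f (h y)| ≤ ‖f‖ := fun y => by
    rw [← Real.norm_eq_abs]; exact f.norm_coe_le_norm (h y)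
  have hint : Integrable (fun y => f (h y)) ν :=
    integrable_of_bounded (f.continuous.measurable.comp hh) hfb
  have h1 : (∫ y, f (h y) ∂ν) - t = ∫ y, (f (h y) - t) ∂ν := by
    rw [integral_sub hint (integrable_const _), integral_const]
    simp [measure_univ]
  have hindint : Integrable (fun y => 2 * ‖f‖ * S.indicator (fun _ => (1:ℝ)) y) ν :=
    ((integrable_const (1:ℝ)).indicator hSm).const_mul _
  rw [h1]
  calc |∫ y, (f (h y) - t) ∂ν| ≤ ∫ y, |f (h y) - t| ∂ν := by
        simpa [Real.norm_eq_abs] using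
          norm_integral_le_integral_norm (μ := ν) (fun y => f (h y) - t)
    _ ≤ ∫ y, (ε2 + 2 * ‖f‖ * S.indicator (fun _ => (1:ℝ)) y) ∂ν := by
        refine integral_mono_ae (hint.sub (integrable_const _)).abs
          ((integrable_const _).add hindint) hae
    _ = ε2 + 2 * ‖f‖ * (ν S).toReal := by
        rw [integral_add (integrable_const _) hindint, integral_const,
          MeasureTheory.integral_const_mul, integral_indicator_const _ hSm]
        simp [measure_univ, measureReal_def]

lemma philim0 (f : BoundedContinuousFunction ℝ ℝ) {lam : ℝ} (hlam : 0 < lam) (g : ℝ) {x : ℝ}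
    (hx : 0 ≤ x) :
    Tendsto (fun τ => ∫ y, f ((1 - τ) * g + τ * y) ∂(nuK lam τ x)) (𝓝[>] 0) (𝓝 (f g)) := by
  rw [Metric.tendsto_nhds]
  intro ε hε
  obtain ⟨δ, hδ, hfc⟩ : ∃ δ > 0, ∀ z : ℝ, |z - g| < δ → |f z - f g| < ε / 2 := by
    obtain ⟨δ, hδ, h⟩ := Metric.continuous_iff.mp f.continuous g (ε/2) (by positivity)
    exact ⟨δ, hδ, fun z hz => by
      have := h z (by simpa [Real.dist_eq] using hz); simpa [Real.dist_eq] using this⟩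
  set A := δ / (2 * (|g| + 1)) with hA
  set B := ε * δ / (16 * (‖f‖ + 1) * (x + 1)) with hB
  have hApos : 0 < A := by rw [hA]; positivity
  have hBpos : 0 < B := by
    have hf0 : (0:ℝ) ≤ ‖f‖ := norm_nonneg f
    rw [hB]; positivity
  set τ₀ := min (min A B) 1 with hτ₀
  have hτ₀pos : 0 < τ₀ := lt_min (lt_min hApos hBpos) one_pos
  filter_upwards [Ioo_mem_nhdsGT_of_mem (left_mem_Ico.mpr hτ₀pos)] with τ hτI
  have hτpos : 0 < τ := hτI.1
  have hτA : τ < A := lt_of_lt_of_le hτI.2 ((min_le_left _ _).trans (min_le_left _ _))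
  have hτB : τ < B := lt_of_lt_of_le hτI.2 ((min_le_left _ _).trans (min_le_right _ _))
  have hτ1 : τ ∈ Ioo (0:ℝ) 1 := ⟨hτpos, lt_of_lt_of_le hτI.2 (min_le_right _ _)⟩
  haveI : IsProbabilityMeasure (nuK lam τ x) := nuK_prob hlam hτ1 x
  set d := δ / (2 * τ) with hd
  have hdpos : 0 < d := by rw [hd]; positivity
  set S := {y : ℝ | d ≤ y} with hS
  have hSm : MeasurableSet S := measurableSet_le measurable_const measurable_id'
  have hae : ∀ᵐ y ∂(nuK lam τ x), |f ((1 - τ) * g + τ * y) - f g|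
      ≤ ε/2 + 2 * ‖f‖ * S.indicator (fun _ => (1:ℝ)) y := by
    filter_upwards [nuK_ae_nonneg (lam := lam) (τ := τ) x] with y hy
    by_cases hyS : y ∈ S
    · rw [indicator_of_mem hyS]
      have h2 : |f ((1 - τ) * g + τ * y) - f g| ≤ 2 * ‖f‖ := by
        calc |f ((1 - τ) * g + τ * y) - f g| = ‖f ((1 - τ) * g + τ * y) - f g‖ := rfl
          _ ≤ ‖f ((1 - τ) * g + τ * y)‖ + ‖f g‖ := norm_sub_le _ _
          _ ≤ ‖f‖ + ‖f‖ := add_le_add (f.norm_coe_le_norm _) (f.norm_coe_le_norm _)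
          _ = 2 * ‖f‖ := by ring
      have : (0:ℝ) ≤ ε / 2 := by positivity
      linarith
    · rw [indicator_of_notMem hyS]
      have hylt : y < d := not_le.mp hyS
      have harg : |((1 - τ) * g + τ * y) - g| < δ := by
        have heq : ((1 - τ) * g + τ * y) - g = τ * (y - g) := by ring
        rw [heq, abs_mul, abs_of_pos hτpos]
        have h3 : |y - g| ≤ y + |g| := by
          calc |y - g| ≤ |y| + |g| := abs_sub _ _
            _ = y + |g| := by rw [abs_of_nonneg hy]
        have h4 : τ * y < δ / 2 := by
          have := (mul_lt_mul_iff_right₀ hτpos).mpr hylt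
          rw [hd] at this
          calc τ * y < τ * (δ / (2 * τ)) := this
            _ = δ / 2 := by field_simp
        have h5 : τ * |g| < δ / 2 := by
          have hgle : |g| < |g| + 1 := by linarith
          have : τ * (|g| + 1) < A * (|g| + 1) := by
            apply (mul_lt_mul_iff_left₀ (by positivity)).mpr hτA
          rw [hA] at this
          have hA2 : δ / (2 * (|g| + 1)) * (|g| + 1) = δ / 2 := by field_simp
          rw [hA2] at this
          nlinarith [abs_nonneg g]
        nlinarith [abs_nonneg g, hy]
      have := hfc _ harg
      simp only [mul_zero, add_zero]
      linarith
  have hest := est f (by fun_prop : Measurable fun y => (1 - τ) * g + τ * y) (f g) hSm hae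
  have hM : ((nuK lam τ x) S).toReal ≤ x / d := nuK_markov1 hlam hτ1 hx hdpos
  have hMval : x / d = 2 * τ * x / δ := by rw [hd]; field_simp
  have htail : 2 * ‖f‖ * ((nuK lam τ x) S).toReal < ε / 2 := by
    have hf0 : (0:ℝ) ≤ ‖f‖ := norm_nonneg f
    have h6 : 2 * ‖f‖ * ((nuK lam τ x) S).toReal ≤ 2 * ‖f‖ * (2 * τ * x / δ) := by
      apply mul_le_mul_of_nonneg_left _ (by positivity)
      rw [← hMval]; exact hM
    have h7 : 2 * ‖f‖ * (2 * τ * x / δ) < ε / 2 := by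
      rw [lt_div_iff₀ (by positivity)] at hτB
      rw [show 2 * ‖f‖ * (2 * τ * x / δ) = (4 * ‖f‖ * τ * x) / δ by ring,
        div_lt_iff₀ hδ]
      nlinarith [mul_nonneg hτpos.le (mul_nonneg hf0 hx), mul_nonneg hf0 hx,
        mul_nonneg hτpos.le hx, mul_nonneg hτpos.le hf0, hε.le, hδ.le]
    linarith
  rw [Real.dist_eq]
  calc |(∫ y, f ((1 - τ) * g + τ * y) ∂(nuK lam τ x)) - f g|
      ≤ ε/2 + 2 * ‖f‖ * ((nuK lam τ x) S).toReal := hest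
    _ < ε := by linarith


lemma philim1 (f : BoundedContinuousFunction ℝ ℝ) {lam : ℝ} (hlam : 0 < lam) (g : ℝ) {x : ℝ}
    (hx : 0 ≤ x) :
    Tendsto (fun τ => ∫ y, f ((1 - τ) * g + τ * y) ∂(nuK lam τ x)) (𝓝[<] 1) (𝓝 (f x)) := by
  rw [Metric.tendsto_nhds]
  intro ε hε
  obtain ⟨δ, hδ, hfc⟩ : ∃ δ > 0, ∀ z : ℝ, |z - x| < δ → |f z - f x| < ε / 2 := by
    obtain ⟨δ, hδ, h⟩ := Metric.continuous_iff.mp f.continuous x (ε/2) (by positivity)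
    exact ⟨δ, hδ, fun z hz => by
      have := h z (by simpa [Real.dist_eq] using hz); simpa [Real.dist_eq] using this⟩
  have hf0 : (0:ℝ) ≤ ‖f‖ := norm_nonneg f
  set A := δ / (2 * (|g| + |x| + 1)) with hA
  set B := ε * (δ/2)^2 * lam / (32 * (‖f‖ + 1) * (x + 1)) with hB
  have hApos : 0 < A := by rw [hA]; positivity
  have hBpos : 0 < B := by rw [hB]; positivity
  set τ₁ := max (max (1 - A) (1 - B)) (1/2) with hτ₁
  have hτ₁lt : τ₁ < 1 := by
    apply max_lt (max_lt (by linarith) (by linarith)) (by norm_num)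
  filter_upwards [Ioo_mem_nhdsLT_of_mem (right_mem_Ioc.mpr hτ₁lt)] with τ hτI
  have hτgt : τ₁ < τ := hτI.1
  have hτlt1 : τ < 1 := hτI.2
  have hτhalf : 1/2 < τ := lt_of_le_of_lt (le_max_right _ _) hτgt
  have hτpos : 0 < τ := by linarith
  have h1τA : 1 - τ < A := by
    have h := le_trans (le_max_left (1-A) (1-B)) (le_max_left _ (1/2))
    linarith [lt_of_le_of_lt h hτgt]
  have h1τB : 1 - τ < B := by
    have h := le_trans (le_max_right (1-A) (1-B)) (le_max_left _ (1/2))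
    linarith [lt_of_le_of_lt h hτgt]
  have hτ1 : τ ∈ Ioo (0:ℝ) 1 := ⟨hτpos, hτlt1⟩
  clear_value τ₁
  haveI : IsProbabilityMeasure (nuK lam τ x) := nuK_prob hlam hτ1 x
  set d := (δ/2)^2 with hdd
  have hdpos : 0 < d := by rw [hdd]; positivity
  clear_value d
  set S := {y : ℝ | d ≤ (y - x)^2} with hS
  have hSm : MeasurableSet S :=
    measurableSet_le measurable_const ((measurable_id'.sub_const x).pow_const 2)
  have hae : ∀ᵐ y ∂(nuK lam τ x), |f ((1 - τ) * g + τ * y) - f x|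
      ≤ ε/2 + 2 * ‖f‖ * S.indicator (fun _ => (1:ℝ)) y := by
    refine ae_of_all _ fun y => ?_
    by_cases hyS : y ∈ S
    · rw [indicator_of_mem hyS]
      have h2 : |f ((1 - τ) * g + τ * y) - f x| ≤ 2 * ‖f‖ := by
        calc |f ((1 - τ) * g + τ * y) - f x| = ‖f ((1 - τ) * g + τ * y) - f x‖ := rfl
          _ ≤ ‖f ((1 - τ) * g + τ * y)‖ + ‖f x‖ := norm_sub_le _ _
          _ ≤ ‖f‖ + ‖f‖ := add_le_add (f.norm_coe_le_norm _) (f.norm_coe_le_norm _)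
          _ = 2 * ‖f‖ := by ring
      have : (0:ℝ) ≤ ε / 2 := by positivity
      linarith
    · rw [indicator_of_notMem hyS]
      have hylt : (y - x)^2 < d := not_le.mp hyS
      have hyx : |y - x| < δ / 2 := by
        have h3 : |y - x| ^ 2 < (δ/2) ^ 2 := by rw [sq_abs]; rw [hdd] at hylt; exact hylt
        exact lt_of_pow_lt_pow_left₀ 2 (by positivity) h3
      have harg : |((1 - τ) * g + τ * y) - x| < δ := by
        have heq : ((1 - τ) * g + τ * y) - x = ((1 - τ) * g + τ * (y - x)) - (1 - τ) * x := by
          ring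
        rw [heq]
        have t1 : |((1 - τ) * g + τ * (y - x)) - (1 - τ) * x|
            ≤ |(1 - τ) * g| + |τ * (y - x)| + |(1 - τ) * x| := by
          calc |((1 - τ) * g + τ * (y - x)) - (1 - τ) * x|
              ≤ |(1 - τ) * g + τ * (y - x)| + |(1 - τ) * x| := abs_sub _ _
            _ ≤ |(1 - τ) * g| + |τ * (y - x)| + |(1 - τ) * x| := by
                linarith [abs_add_le ((1 - τ) * g) (τ * (y - x))]
        have h1τ : (0:ℝ) ≤ 1 - τ := by linarith
        have t2 : |(1 - τ) * g| = (1 - τ) * |g| := by rw [abs_mul, abs_of_nonneg h1τ]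
        have t3 : |(1 - τ) * x| = (1 - τ) * |x| := by rw [abs_mul, abs_of_nonneg h1τ]
        have t4 : |τ * (y - x)| ≤ |y - x| := by
          rw [abs_mul, abs_of_pos hτpos]
          nlinarith [abs_nonneg (y - x)]
        have hA2 : A * (|g| + |x| + 1) = δ / 2 := by rw [hA]; field_simp
        have t5 : (1 - τ) * |g| + (1 - τ) * |x| < δ / 2 := by
          nlinarith [abs_nonneg g, abs_nonneg x, h1τA, hApos]
        calc |((1 - τ) * g + τ * (y - x)) - (1 - τ) * x|
            ≤ |(1 - τ) * g| + |τ * (y - x)| + |(1 - τ) * x| := t1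
          _ < δ := by rw [t2, t3]; linarith
      have := hfc _ harg
      simp only [mul_zero, add_zero]
      linarith
  have hest := est f (by fun_prop : Measurable fun y => (1 - τ) * g + τ * y) (f x) hSm hae
  set M := ((nuK lam τ x) S).toReal with hMdef
  have hM0 : 0 ≤ M := hMdef ▸ ENNReal.toReal_nonneg
  have hM : M ≤ (2 * x / (lam * τ / (1 - τ))) / d := by
    have h := nuK_markov2 (lam := lam) (τ := τ) (x := x) (d := d) hlam hτ1 hx hdpos
    rw [← hS] at h
    rw [← hMdef] at h
    exact h
  clear_value M
  have h1τpos : 0 < 1 - τ := by linarith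
  have hval : (2 * x / (lam * τ / (1 - τ))) / d = 2 * x * (1 - τ) / (lam * τ * d) := by
    field_simp
  have key : 2 * x * (1 - τ) / (lam * τ * d) ≤ 4 * x * (1 - τ) / (lam * d) := by
    rw [div_le_div_iff₀ (mul_pos (mul_pos hlam hτpos) hdpos) (mul_pos hlam hdpos)]
    nlinarith [mul_nonneg (mul_nonneg (mul_nonneg (mul_nonneg hx h1τpos.le) hlam.le) hdpos.le)
      (show (0:ℝ) ≤ 2*τ - 1 by linarith)]
  have key2 : 2 * ‖f‖ * (4 * x * (1 - τ) / (lam * d)) < ε / 2 := by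
    rw [show 2 * ‖f‖ * (4 * x * (1 - τ) / (lam * d)) = (8 * ‖f‖ * x * (1 - τ)) / (lam * d) by
      ring, div_lt_iff₀ (mul_pos hlam hdpos)]
    rw [hB, lt_div_iff₀ (by positivity)] at h1τB
    rw [show ε * d * lam = ε * (lam * d) by ring] at h1τB
    rw [show (8:ℝ) * ‖f‖ * x * (1 - τ) = 8 * ((1 - τ) * (‖f‖ * x)) by ring,
      show ε / 2 * (lam * d) = ε * (lam * d) / 2 by ring]
    have h32 : (1 - τ) * (32 * (‖f‖ + 1) * (x + 1)) = 32 * ((1 - τ) * (‖f‖ * x))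
        + 32 * ((1 - τ) * ‖f‖) + 32 * ((1 - τ) * x) + 32 * (1 - τ) := by ring
    rw [h32] at h1τB
    have e1 : (0:ℝ) ≤ (1 - τ) * (‖f‖ * x) := mul_nonneg h1τpos.le (mul_nonneg hf0 hx)
    have e2 : (0:ℝ) ≤ (1 - τ) * ‖f‖ := mul_nonneg h1τpos.le hf0
    have e3 : (0:ℝ) ≤ (1 - τ) * x := mul_nonneg h1τpos.le hx
    have e4 : (0:ℝ) < ε * (lam * d) := mul_pos hε (mul_pos hlam hdpos)
    linarith [e1, e2, e3, e4, h1τpos.le]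
  have htail : 2 * ‖f‖ * M < ε / 2 := by
    have s1 : 2 * ‖f‖ * M ≤ 2 * ‖f‖ * (2 * x * (1 - τ) / (lam * τ * d)) := by
      apply mul_le_mul_of_nonneg_left _ (by positivity)
      rw [← hval]; exact hM
    have s2 : 2 * ‖f‖ * (2 * x * (1 - τ) / (lam * τ * d))
        ≤ 2 * ‖f‖ * (4 * x * (1 - τ) / (lam * d)) :=
      mul_le_mul_of_nonneg_left key (by positivity)
    exact lt_of_le_of_lt (s1.trans s2) key2
  rw [Real.dist_eq]
  calc |(∫ y, f ((1 - τ) * g + τ * y) ∂(nuK lam τ x)) - f x|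
      ≤ ε/2 + 2 * ‖f‖ * M := hest
    _ < ε := by linarith

end SmartPathAux5

namespace SmartPathAux6
open SmartPathAux SmartPathAux2 SmartPathAux3 SmartPathAux4 SmartPathAux5

lemma mixture_eq (lam τ : ℝ) (μX : Measure ℝ) :
    mixtureLaw lam τ μX = μX.bind (nuK lam τ) := rfl

lemma norm_int_le {γ : Type*} [MeasurableSpace γ] {μ : Measure γ} [IsProbabilityMeasure μ]
    {h : γ → ℝ} {C : ℝ} (hC : ∀ y, ‖h y‖ ≤ C) : ‖∫ y, h y ∂μ‖ ≤ C := by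
  simpa [measure_univ] using norm_integral_le_of_norm_le_const (μ := μ) (ae_of_all _ hC)

lemma fnorm (f : BoundedContinuousFunction ℝ ℝ) (z : ℝ) : |f z| ≤ ‖f‖ := by
  rw [← Real.norm_eq_abs]; exact f.norm_coe_le_norm z

lemma phi_meas {lam τ : ℝ} (hlam : 0 < lam) (hτ : τ ∈ Ioo (0:ℝ) 1)
    (f : BoundedContinuousFunction ℝ ℝ) :
    StronglyMeasurable fun p : ℝ × ℝ => ∫ y, f ((1 - τ) * p.1 + τ * y) ∂(nuK lam τ p.2) := by
  set κ : Kernel ℝ ℝ := ⟨nuK lam τ, nuK_meas lam τ⟩ with hκ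
  haveI : IsMarkovKernel κ := ⟨fun x => nuK_prob hlam hτ x⟩
  set κ' : Kernel (ℝ × ℝ) ℝ := κ.comap Prod.snd measurable_snd with hκ'
  have hcont : Continuous fun q : (ℝ × ℝ) × ℝ => f ((1 - τ) * q.1.1 + τ * q.2) :=
    f.continuous.comp (by fun_prop)
  have hsm := MeasureTheory.StronglyMeasurable.integral_kernel_prod_right'
    (κ := κ') hcont.stronglyMeasurable
  have hap : ∀ p : ℝ × ℝ, κ' p = nuK lam τ p.2 := fun p => by
    rw [hκ', Kernel.comap_apply]
    rfl
  simpa [hap] using hsm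

lemma smart_formula (α lam τ : ℝ) (hα : 0 < α) (hlam : 0 < lam) (hτ : τ ∈ Ioo (0:ℝ) 1)
    (μX : Measure ℝ) [IsProbabilityMeasure μX] (f : BoundedContinuousFunction ℝ ℝ) :
    ∫ z, f z ∂(smartLaw α lam τ μX)
      = ∫ g, ∫ x, ∫ y, f ((1 - τ) * g + τ * y) ∂(nuK lam τ x) ∂μX ∂(gammaMeasure α lam) := by
  haveI hγ : IsProbabilityMeasure (gammaMeasure α lam) := isProbabilityMeasure_gammaMeasure hα hlam
  haveI hmix : IsProbabilityMeasure (mixtureLaw lam τ μX) := by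
    rw [mixture_eq]
    exact bind_prob μX _ (nuK_meas lam τ) (nuK_prob hlam hτ)
  set A := (gammaMeasure α lam).map (fun y => (1 - τ) * y) with hA
  set B := (mixtureLaw lam τ μX).map (fun y => τ * y) with hB
  haveI : IsProbabilityMeasure A := Measure.isProbabilityMeasure_map (by fun_prop)
  haveI : IsProbabilityMeasure B := Measure.isProbabilityMeasure_map (by fun_prop)
  have hconv : smartLaw α lam τ μX = Measure.map (fun p : ℝ × ℝ => p.1 + p.2) (A.prod B) := rfl
  have hintp : Integrable (fun p : ℝ × ℝ => f (p.1 + p.2)) (A.prod B) := by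
    have := BoundedContinuousFunction.integrable (A.prod B)
      (f.compContinuous (⟨fun p : ℝ × ℝ => p.1 + p.2, by continuity⟩ : C(ℝ × ℝ, ℝ)))
    exact this
  rw [hconv, integral_map measurable_add.aemeasurable
    f.continuous.measurable.aestronglyMeasurable, integral_prod _ hintp]
  have hΦsm : AEStronglyMeasurable (fun a : ℝ => ∫ b, f (a + b) ∂B) A := by
    refine StronglyMeasurable.aestronglyMeasurable ?_
    exact MeasureTheory.StronglyMeasurable.integral_prod_right'
      (f.continuous.comp (by fun_prop : Continuous fun p : ℝ × ℝ => p.1 + p.2)).stronglyMeasurable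
  rw [hA, integral_map (by fun_prop : AEMeasurable (fun y : ℝ => (1 - τ) * y) _) (hA ▸ hΦsm)]
  refine integral_congr_ae (ae_of_all _ fun g => ?_)
  have hstep : (∫ b, f ((1 - τ) * g + b) ∂B)
      = ∫ x, ∫ y, f ((1 - τ) * g + τ * y) ∂(nuK lam τ x) ∂μX := by
    have hc : Continuous fun b : ℝ => f ((1 - τ) * g + b) :=
      f.continuous.comp (continuous_const.add continuous_id)
    rw [hB, integral_map (measurable_const_mul τ).aemeasurable hc.aestronglyMeasurable]
    have hm : Measurable fun y : ℝ => f ((1 - τ) * g + τ * y) :=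
      f.continuous.measurable.comp (by fun_prop)
    rw [mixture_eq, integral_bind_of_bounded μX (nuK lam τ) (nuK_meas lam τ) (nuK_prob hlam hτ)
      (fun y => f ((1 - τ) * g + τ * y)) hm ‖f‖ (norm_nonneg f) (fun y => fnorm f _)]
  exact hstep

end SmartPathAux6

open SmartPathAux SmartPathAux2 SmartPathAux3 SmartPathAux4 SmartPathAux5 SmartPathAux6

/-- The gamma smart path interpolates in distribution between `γ(α,λ)` (as `τ → 0⁺`)
and `X` (as `τ → 1⁻`): convergence in distribution is stated by testing against
bounded continuous functions. -/
theorem smartLaw_interpolates (α lam : ℝ) (hα : 0 < α) (hlam : 0 < lam)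
    (μX : Measure ℝ) [IsProbabilityMeasure μX] (hXpos : μX (Iic 0) = 0) :
    (∀ f : BoundedContinuousFunction ℝ ℝ,
        Tendsto (fun τ => ∫ x, f x ∂(smartLaw α lam τ μX)) (𝓝[>] 0)
          (𝓝 (∫ x, f x ∂(gammaMeasure α lam)))) ∧
    (∀ f : BoundedContinuousFunction ℝ ℝ,
        Tendsto (fun τ => ∫ x, f x ∂(smartLaw α lam τ μX)) (𝓝[<] 1)
          (𝓝 (∫ x, f x ∂μX))) := by
  haveI hγ : IsProbabilityMeasure (gammaMeasure α lam) := isProbabilityMeasure_gammaMeasure hα hlam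
  have hXae : ∀ᵐ x ∂μX, 0 ≤ x := by
    refine ae_iff.mpr ?_
    rw [show {x : ℝ | ¬ 0 ≤ x} = Iio 0 by ext z; simp]
    exact measure_mono_null Iio_subset_Iic_self hXpos
  constructor
  · intro f
    have hform : (fun τ : ℝ => ∫ z, f z ∂(smartLaw α lam τ μX)) =ᶠ[𝓝[>] (0:ℝ)]
        (fun τ => ∫ g, ∫ x, ∫ y, f ((1 - τ) * g + τ * y) ∂(nuK lam τ x)
          ∂μX ∂(gammaMeasure α lam)) := by
      filter_upwards [Ioo_mem_nhdsGT_of_mem (left_mem_Ico.mpr one_pos)] with τ hτ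
      exact smart_formula α lam τ hα hlam hτ μX f
    rw [tendsto_congr' hform]
    refine tendsto_integral_filter_of_dominated_convergence (μ := gammaMeasure α lam)
      (bound := fun _ => ‖f‖) ?_ ?_ (integrable_const _) ?_
    · filter_upwards [Ioo_mem_nhdsGT_of_mem (left_mem_Ico.mpr one_pos)] with τ hτ
      exact ((phi_meas hlam hτ f).integral_prod_right').aestronglyMeasurable
    · filter_upwards [Ioo_mem_nhdsGT_of_mem (left_mem_Ico.mpr one_pos)] with τ hτ
      refine ae_of_all _ fun g => ?_
      refine norm_int_le fun x => ?_
      haveI := nuK_prob hlam hτ x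
      exact norm_int_le fun y => f.norm_coe_le_norm _
    · refine ae_of_all _ fun g => ?_
      have hlim : Tendsto (fun τ => ∫ x, ∫ y, f ((1 - τ) * g + τ * y) ∂(nuK lam τ x) ∂μX)
          (𝓝[>] (0:ℝ)) (𝓝 (∫ _ : ℝ, f g ∂μX)) := by
        refine tendsto_integral_filter_of_dominated_convergence (μ := μX)
          (bound := fun _ => ‖f‖) ?_ ?_ (integrable_const _) ?_
        · filter_upwards [Ioo_mem_nhdsGT_of_mem (left_mem_Ico.mpr one_pos)] with τ hτ
          have hm : Measurable fun y : ℝ => f ((1 - τ) * g + τ * y) :=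
            f.continuous.measurable.comp (by fun_prop)
          exact (measurable_integral_kernel (nuK lam τ) (nuK_meas lam τ) (nuK_prob hlam hτ)
            (fun y => f ((1 - τ) * g + τ * y)) hm ‖f‖ (fun y => fnorm f _)).aestronglyMeasurable
        · filter_upwards [Ioo_mem_nhdsGT_of_mem (left_mem_Ico.mpr one_pos)] with τ hτ
          refine ae_of_all _ fun x => ?_
          haveI := nuK_prob hlam hτ x
          exact norm_int_le fun y => f.norm_coe_le_norm _
        · filter_upwards [hXae] with x hx
          exact philim0 f hlam g hx
      simpa [measure_univ] using hlim
  · intro f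
    have hform : (fun τ : ℝ => ∫ z, f z ∂(smartLaw α lam τ μX)) =ᶠ[𝓝[<] (1:ℝ)]
        (fun τ => ∫ g, ∫ x, ∫ y, f ((1 - τ) * g + τ * y) ∂(nuK lam τ x)
          ∂μX ∂(gammaMeasure α lam)) := by
      filter_upwards [Ioo_mem_nhdsLT_of_mem (right_mem_Ioc.mpr one_pos)] with τ hτ
      exact smart_formula α lam τ hα hlam hτ μX f
    rw [tendsto_congr' hform]
    have hmain : Tendsto (fun τ => ∫ g, ∫ x, ∫ y, f ((1 - τ) * g + τ * y) ∂(nuK lam τ x)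
        ∂μX ∂(gammaMeasure α lam)) (𝓝[<] (1:ℝ))
        (𝓝 (∫ _ : ℝ, (∫ x, f x ∂μX) ∂(gammaMeasure α lam))) := by
      refine tendsto_integral_filter_of_dominated_convergence (μ := gammaMeasure α lam)
        (bound := fun _ => ‖f‖) ?_ ?_ (integrable_const _) ?_
      · filter_upwards [Ioo_mem_nhdsLT_of_mem (right_mem_Ioc.mpr one_pos)] with τ hτ
        exact ((phi_meas hlam hτ f).integral_prod_right').aestronglyMeasurable
      · filter_upwards [Ioo_mem_nhdsLT_of_mem (right_mem_Ioc.mpr one_pos)] with τ hτ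
        refine ae_of_all _ fun g => ?_
        refine norm_int_le fun x => ?_
        haveI := nuK_prob hlam hτ x
        exact norm_int_le fun y => f.norm_coe_le_norm _
      · refine ae_of_all _ fun g => ?_
        refine tendsto_integral_filter_of_dominated_convergence (μ := μX)
          (bound := fun _ => ‖f‖) ?_ ?_ (integrable_const _) ?_
        · filter_upwards [Ioo_mem_nhdsLT_of_mem (right_mem_Ioc.mpr one_pos)] with τ hτ
          have hm : Measurable fun y : ℝ => f ((1 - τ) * g + τ * y) :=
            f.continuous.measurable.comp (by fun_prop)
          exact (measurable_integral_kernel (nuK lam τ) (nuK_meas lam τ) (nuK_prob hlam hτ)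
            (fun y => f ((1 - τ) * g + τ * y)) hm ‖f‖ (fun y => fnorm f _)).aestronglyMeasurable
        · filter_upwards [Ioo_mem_nhdsLT_of_mem (right_mem_Ioc.mpr one_pos)] with τ hτ
          refine ae_of_all _ fun x => ?_
          haveI := nuK_prob hlam hτ x
          exact norm_int_le fun y => f.norm_coe_le_norm _
        · filter_upwards [hXae] with x hx
          exact philim1 f hlam g hx
    simpa [measure_univ] using hmain
end
end

section
/- Let X₁,...,X_N be independent almost surely positive random variables and X = X₁ + ... + X_N. Then the gamma smart path of X satisfies the distributional identity X_τ(X) = Σ_{i=1}^N [(1-τ)γ^i(α/N, λ) + τ Y^i(τ, X_i, λ)] in law, where γ^i(α/N, λ) are i.i.d. Gamma(α/N, λ) random variables and Y^i(τ,X_i,λ) are independent Poisson–gamma mixtures built from X_i, all independent of each other. -/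
open MeasureTheory ProbabilityTheory Real Set Filter Topology

noncomputable section

/-- Iterated additive convolution of a finite family of measures. -/
def convList {N : ℕ} (μ : Fin N → Measure ℝ) : Measure ℝ :=
  (List.ofFn μ).foldr (fun m acc => Measure.conv m acc) (Measure.dirac 0)

/-- Law of one summand `(1-τ)γⁱ(α/N, λ) + τ Yⁱ(τ, X_i, λ)` of the decomposition. -/
def summandLaw (α lam τ : ℝ) (N : ℕ) (μi : Measure ℝ) : Measure ℝ :=
  Measure.conv ((gammaMeasure (α / N) lam).map (fun y => (1 - τ) * y))
    ((mixtureLaw lam τ μi).map (fun y => τ * y))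

namespace SmartAux

open scoped ENNReal NNReal


variable {M : Type*} [AddCommMonoid M] [MeasurableSpace M] [MeasurableAdd₂ M]

omit [AddCommMonoid M] [MeasurableAdd₂ M] in
lemma ext_of_lintegral (μ ν : Measure M)
    (h : ∀ f : M → ℝ≥0∞, Measurable f → ∫⁻ x, f x ∂μ = ∫⁻ x, f x ∂ν) : μ = ν := by
  ext s hs
  have := h (s.indicator 1) (measurable_one.indicator hs)
  simpa [lintegral_indicator_one hs] using this

lemma lintegral_conv {μ ν : Measure M} [SFinite μ] [SFinite ν] {f : M → ℝ≥0∞}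
    (hf : Measurable f) :
    ∫⁻ z, f z ∂(Measure.conv μ ν) = ∫⁻ x, ∫⁻ y, f (x + y) ∂ν ∂μ := by
  rw [Measure.conv, lintegral_map hf measurable_add, lintegral_prod]
  exact (hf.comp measurable_add).aemeasurable

lemma conv_assoc (μ ν ρ : Measure M) [SFinite μ] [SFinite ν] [SFinite ρ] :
    Measure.conv (Measure.conv μ ν) ρ = Measure.conv μ (Measure.conv ν ρ) := by
  refine ext_of_lintegral _ _ fun f hf => ?_
  have h1 : Measurable fun x : M => ∫⁻ y, f (x + y) ∂ρ :=
    Measurable.lintegral_prod_right' (show Measurable fun p : M × M => f (p.1 + p.2) from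
      hf.comp measurable_add)
  have h2 : Measurable fun x : M => ∫⁻ y, f (x + y) ∂(Measure.conv ν ρ) :=
    Measurable.lintegral_prod_right' (show Measurable fun p : M × M => f (p.1 + p.2) from
      hf.comp measurable_add)
  rw [lintegral_conv hf, lintegral_conv h1, lintegral_conv hf]
  refine lintegral_congr fun x => ?_
  rw [lintegral_conv (show Measurable fun w => f (x + w) from hf.comp (measurable_const_add x))]
  exact lintegral_congr fun y => lintegral_congr fun z => by rw [add_assoc]

lemma map_conv (μ ν : Measure ℝ) [SFinite μ] [SFinite ν] (c : ℝ) :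
    (Measure.conv μ ν).map (fun y => c * y)
      = Measure.conv (μ.map fun y => c * y) (ν.map fun y => c * y) := by
  refine ext_of_lintegral _ _ fun f hf => ?_
  have hc : Measurable fun y : ℝ => c * y := measurable_const_mul c
  rw [lintegral_map hf hc,
    lintegral_conv (show Measurable fun a => f (c * a) from hf.comp hc),
    lintegral_conv hf,
    lintegral_map (Measurable.lintegral_prod_right'
      (show Measurable fun p : ℝ × ℝ => f (p.1 + p.2) from hf.comp measurable_add)) hc]
  refine lintegral_congr fun x => ?_
  rw [lintegral_map (show Measurable fun w => f (c * x + w) from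
    hf.comp (measurable_const_add _)) hc]
  exact lintegral_congr fun y => by rw [mul_add]

lemma conv_dirac_zero (μ : Measure M) [SFinite μ] :
    Measure.conv μ (Measure.dirac 0) = μ := by simp

lemma conv_comm' (μ ν : Measure M) [SFinite μ] [SFinite ν] :
    Measure.conv μ ν = Measure.conv ν μ := Measure.conv_comm μ ν



lemma poissonMeasure_singleton (r : ℝ≥0) (n : ℕ) :
    poissonMeasure r {n} = ENNReal.ofReal (poissonPMFReal r n) := by
  rw [ProbabilityTheory.poissonMeasure_singleton]
  rfl

lemma poissonPMFReal_add (a b : ℝ≥0) (n : ℕ) :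
    poissonPMFReal (a + b) n
      = ∑ k ∈ Finset.range (n + 1), poissonPMFReal a k * poissonPMFReal b (n - k) := by
  unfold poissonPMFReal
  push_cast
  rw [add_pow]
  rw [mul_comm, mul_div_assoc, Finset.sum_mul]
  refine Finset.sum_congr rfl fun k hk => ?_
  have hk' : k ≤ n := Nat.lt_succ_iff.mp (Finset.mem_range.mp hk)
  have hfac : (k.factorial : ℝ) * (n - k).factorial * n.choose k = n.factorial := by
    rw [← Nat.choose_mul_factorial_mul_factorial hk']
    push_cast; ring
  have h1 : rexp (-(↑a + ↑b)) = rexp (-↑a) * rexp (-↑b) := by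
    rw [← Real.exp_add]; ring_nf
  rw [h1]
  have h2 : (n.factorial : ℝ) ≠ 0 := Nat.cast_ne_zero.mpr n.factorial_ne_zero
  have h3 : (k.factorial : ℝ) ≠ 0 := Nat.cast_ne_zero.mpr k.factorial_ne_zero
  have h4 : ((n - k).factorial : ℝ) ≠ 0 := Nat.cast_ne_zero.mpr (n - k).factorial_ne_zero
  field_simp
  rw [← hfac]
  ring

lemma poissonMeasure_add (a b : ℝ≥0) :
    poissonMeasure (a + b) = Measure.conv (poissonMeasure a) (poissonMeasure b) := by
  refine (Measure.ext_of_singleton fun n => ?_).symm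
  rw [Measure.conv, Measure.map_apply measurable_add (measurableSet_singleton n),
    Measure.prod_apply ((Set.to_countable _).measurableSet)]
  have hset : ∀ k : ℕ, (Prod.mk k ⁻¹' ((fun p : ℕ × ℕ => p.1 + p.2) ⁻¹' {n}))
      = if k ≤ n then {n - k} else ∅ := by
    intro k
    ext l
    by_cases h : k ≤ n <;> simp [Set.mem_preimage, Set.mem_singleton_iff] <;> omega
  simp_rw [hset]
  rw [lintegral_countable' (μ := poissonMeasure a)]
  have : ∀ k : ℕ, (poissonMeasure b) (if k ≤ n then ({n - k} : Set ℕ) else ∅)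
      * poissonMeasure a {k}
      = if k ∈ Finset.range (n + 1) then
          ENNReal.ofReal (poissonPMFReal a k * poissonPMFReal b (n - k)) else 0 := by
    intro k
    by_cases h : k ≤ n
    · rw [if_pos h, if_pos (Finset.mem_range.mpr (Nat.lt_succ_of_le h)),
        poissonMeasure_singleton, poissonMeasure_singleton,
        ← ENNReal.ofReal_mul poissonPMFReal_nonneg, mul_comm,
        ENNReal.ofReal_mul poissonPMFReal_nonneg]
    · rw [if_neg h, if_neg (by simpa [Nat.lt_succ_iff] using h), measure_empty, zero_mul]
  calc ∑' k : ℕ, (poissonMeasure b) (if k ≤ n then ({n - k} : Set ℕ) else ∅)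
        * poissonMeasure a {k}
      = ∑' k : ℕ, if k ∈ Finset.range (n + 1) then
          ENNReal.ofReal (poissonPMFReal a k * poissonPMFReal b (n - k)) else 0 := by
        exact tsum_congr this
    _ = ∑ k ∈ Finset.range (n + 1),
          ENNReal.ofReal (poissonPMFReal a k * poissonPMFReal b (n - k)) := by
        rw [tsum_eq_sum (fun k hk => if_neg hk)]
        exact Finset.sum_congr rfl fun k hk => if_pos hk
    _ = poissonMeasure (a + b) {n} := by
        rw [poissonMeasure_singleton, poissonPMFReal_add,
          ENNReal.ofReal_sum_of_nonneg (fun k _ =>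
            mul_nonneg poissonPMFReal_nonneg poissonPMFReal_nonneg)]



lemma measurable_gammaPDF (a r : ℝ) : Measurable (gammaPDF a r) :=
  (measurable_gammaPDFReal a r).ennreal_ofReal

lemma conv_withDensity {f g : ℝ → ℝ≥0∞} (hf : Measurable f) (hg : Measurable g) :
    Measure.conv (volume.withDensity f) (volume.withDensity g)
      = volume.withDensity (fun z => ∫⁻ t, f t * g (z - t)) := by
  have hdens : Measurable fun z => ∫⁻ t, f t * g (z - t) :=
    Measurable.lintegral_prod_right'
      (show Measurable fun p : ℝ × ℝ => f p.2 * g (p.1 - p.2) from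
        (hf.comp measurable_snd).mul (hg.comp (measurable_fst.sub measurable_snd)))
  refine ext_of_lintegral _ _ fun φ hφ => ?_
  have hinner_meas : Measurable fun x : ℝ => ∫⁻ y, φ (x + y) ∂(volume.withDensity g) :=
    Measurable.lintegral_prod_right'
      (show Measurable fun p : ℝ × ℝ => φ (p.1 + p.2) from hφ.comp measurable_add)
  have inner : ∀ x : ℝ, ∫⁻ y, φ (x + y) ∂(volume.withDensity g)
      = ∫⁻ z, g (z - x) * φ z ∂volume := by
    intro x
    rw [lintegral_withDensity_eq_lintegral_mul volume hg (show Measurable fun y => φ (x + y) from hφ.comp (measurable_const_add x))]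
    have h2 := lintegral_add_left_eq_self (μ := volume) (fun z => g (z - x) * φ z) x
    simp only [add_sub_cancel_left] at h2
    rw [← h2]
    rfl
  rw [lintegral_conv hφ,
    lintegral_withDensity_eq_lintegral_mul volume hf hinner_meas,
    lintegral_withDensity_eq_lintegral_mul volume hdens hφ]
  simp only [Pi.mul_apply]
  calc ∫⁻ x, f x * ∫⁻ y, φ (x + y) ∂(volume.withDensity g) ∂volume
      = ∫⁻ x, ∫⁻ z, f x * (g (z - x) * φ z) ∂volume ∂volume := by
        refine lintegral_congr fun x => ?_
        rw [inner x, lintegral_const_mul (f x)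
          (show Measurable fun z => g (z - x) * φ z from
            ((hg.comp (measurable_sub_const x)).mul hφ))]
    _ = ∫⁻ z, ∫⁻ x, f x * (g (z - x) * φ z) ∂volume ∂volume := by
        refine lintegral_lintegral_swap ?_
        exact ((hf.comp measurable_fst).mul ((hg.comp (measurable_snd.sub measurable_fst)).mul
          (hφ.comp measurable_snd))).aemeasurable
    _ = ∫⁻ z, (∫⁻ t, f t * g (z - t) ∂volume) * φ z ∂volume := by
        refine lintegral_congr fun z => ?_
        rw [← lintegral_mul_const _ (show Measurable fun t => f t * g (z - t) from
          hf.mul (hg.comp (measurable_const_sub z)))]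
        exact lintegral_congr fun x => by rw [mul_assoc]

lemma gammaMeasure_conv {a b r : ℝ} (ha : 0 < a) (hb : 0 < b) (hr : 0 < r) :
    Measure.conv (gammaMeasure a r) (gammaMeasure b r) = gammaMeasure (a + b) r := by
  haveI h1 : IsProbabilityMeasure (gammaMeasure a r) := isProbabilityMeasure_gammaMeasure ha hr
  haveI h2 : IsProbabilityMeasure (gammaMeasure b r) := isProbabilityMeasure_gammaMeasure hb hr
  haveI h3 : IsProbabilityMeasure (gammaMeasure (a + b) r) :=
    isProbabilityMeasure_gammaMeasure (by linarith) hr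
  have hΓa := (Real.Gamma_pos_of_pos ha).ne'
  have hΓb := (Real.Gamma_pos_of_pos hb).ne'
  have hΓab := (Real.Gamma_pos_of_pos (show (0:ℝ) < a + b by linarith)).ne'
  set B : ℝ → ℝ := fun u => if 0 ≤ u ∧ u ≤ 1 then u ^ (a - 1) * (1 - u) ^ (b - 1) else 0 with hBdef
  have hBnonneg : ∀ u, 0 ≤ B u := by
    intro u
    rw [hBdef]
    dsimp only
    split_ifs with h
    · exact mul_nonneg (rpow_nonneg h.1 _) (rpow_nonneg (by linarith [h.2]) _)
    · exact le_refl 0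
  have hBmeas : Measurable B := by
    refine Measurable.ite ?_ ?_ measurable_const
    · exact (measurableSet_le measurable_const measurable_id).inter
        (measurableSet_le measurable_id measurable_const)
    · fun_prop
  set κ : ℝ≥0∞ := ∫⁻ u, ENNReal.ofReal (B u) with hκdef
  set κ' : ℝ≥0∞ := κ * ENNReal.ofReal (Real.Gamma (a + b) / (Real.Gamma a * Real.Gamma b))
    with hκ'def
  have key : ∀ z : ℝ, z ≠ 0 →
      (∫⁻ t, gammaPDF a r t * gammaPDF b r (z - t)) = κ' * gammaPDF (a + b) r z := by
    intro z hz0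
    rcases lt_or_gt_of_ne hz0 with hz | hz
    · -- z < 0 : both sides vanish
      have : ∀ t : ℝ, gammaPDF a r t * gammaPDF b r (z - t) = 0 := by
        intro t
        rcases lt_or_ge t 0 with h | h
        · rw [gammaPDF_of_neg h, zero_mul]
        · rw [gammaPDF_of_neg (show z - t < 0 by linarith), mul_zero]
      rw [lintegral_congr this, lintegral_zero, gammaPDF_of_neg hz, mul_zero]
    · -- z > 0
      set D : ℝ := (r ^ a / Real.Gamma a) * (r ^ b / Real.Gamma b)
        * (z ^ (a - 1) * z ^ (b - 1) * Real.exp (-(r * z))) with hDdef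
      have hD : 0 ≤ D := by
        refine mul_nonneg (mul_nonneg ?_ ?_) ?_
        · exact div_nonneg (rpow_nonneg hr.le _) (Real.Gamma_pos_of_pos ha).le
        · exact div_nonneg (rpow_nonneg hr.le _) (Real.Gamma_pos_of_pos hb).le
        · exact mul_nonneg (mul_nonneg (rpow_nonneg hz.le _) (rpow_nonneg hz.le _))
            (Real.exp_nonneg _)
      set F : ℝ → ℝ≥0∞ := fun t => gammaPDF a r t * gammaPDF b r (z - t) with hFdef
      have hFmeas : Measurable F :=
        (measurable_gammaPDF a r).mul
          ((measurable_gammaPDF b r).comp (measurable_const.sub measurable_id))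
      have pointwise : ∀ u : ℝ, F (z * u) = ENNReal.ofReal (D * B u) := by
        intro u
        by_cases hu : 0 ≤ u
        · by_cases hu1 : u ≤ 1
          · have hzu : 0 ≤ z * u := mul_nonneg hz.le hu
            have hzu2 : 0 ≤ z - z * u := by nlinarith
            rw [hFdef]
            dsimp only
            rw [gammaPDF_of_nonneg hzu, gammaPDF_of_nonneg hzu2,
              ← ENNReal.ofReal_mul (by positivity)]
            congr 1
            have hBu : B u = u ^ (a - 1) * (1 - u) ^ (b - 1) := by
              rw [hBdef]; exact if_pos ⟨hu, hu1⟩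
            rw [hBu, hDdef]
            have hsplit1 : (z * u) ^ (a - 1) = z ^ (a - 1) * u ^ (a - 1) :=
              Real.mul_rpow hz.le hu
            have hsplit2 : (z - z * u) ^ (b - 1) = z ^ (b - 1) * (1 - u) ^ (b - 1) := by
              rw [show z - z * u = z * (1 - u) by ring]
              exact Real.mul_rpow hz.le (by linarith)
            have hexp : Real.exp (-(r * (z * u))) * Real.exp (-(r * (z - z * u)))
                = Real.exp (-(r * z)) := by
              rw [← Real.exp_add]; congr 1; ring
            rw [hsplit1, hsplit2]
            linear_combination (r ^ a / Real.Gamma a * (r ^ b / Real.Gamma b)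
              * (z ^ (a - 1) * z ^ (b - 1)) * (u ^ (a - 1) * (1 - u) ^ (b - 1))) * hexp
          · have : z - z * u < 0 := by nlinarith
            rw [hFdef]
            dsimp only
            rw [gammaPDF_of_neg this, mul_zero, hBdef]
            simp [hu1]
        · have : z * u < 0 := by
            rcases lt_or_ge u 0 with h | h
            · exact mul_neg_of_pos_of_neg hz h
            · exact absurd h hu
          rw [hFdef]
          dsimp only
          rw [gammaPDF_of_neg this, zero_mul, hBdef]
          simp [hu]
      have change : (∫⁻ t, F t ∂volume) = ENNReal.ofReal z * ∫⁻ u, F (z * u) ∂volume := by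
        have e1 : ∫⁻ u, F (z * u) ∂volume
            = ∫⁻ t, F t ∂(Measure.map (fun u => z * u) volume) :=
          (lintegral_map hFmeas (measurable_const_mul z)).symm
        rw [Real.map_volume_mul_left hz0, lintegral_smul_measure, smul_eq_mul] at e1
        rw [e1, ← mul_assoc, abs_of_pos (inv_pos.mpr hz), ← ENNReal.ofReal_mul hz.le,
          mul_inv_cancel₀ hz0, ENNReal.ofReal_one, one_mul]
      have step3 : ∫⁻ u, F (z * u) ∂volume = ENNReal.ofReal D * κ := by
        rw [lintegral_congr pointwise, hκdef]
        have : ∀ u : ℝ, ENNReal.ofReal (D * B u) = ENNReal.ofReal D * ENNReal.ofReal (B u) :=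
          fun u => ENNReal.ofReal_mul hD
        rw [lintegral_congr this, lintegral_const_mul _ hBmeas.ennreal_ofReal]
      have hz1 : z * (z ^ (a - 1) * z ^ (b - 1)) = z ^ (a + b - 1) := by
        rw [show a + b - 1 = 1 + (a - 1) + (b - 1) by ring, Real.rpow_add hz,
          Real.rpow_add hz, Real.rpow_one]
        ring
      have hrab : r ^ (a + b) = r ^ a * r ^ b := Real.rpow_add hr a b
      have hG : 0 ≤ Real.Gamma (a + b) / (Real.Gamma a * Real.Gamma b) :=
        div_nonneg (Real.Gamma_pos_of_pos (by linarith)).le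
          (mul_nonneg (Real.Gamma_pos_of_pos ha).le (Real.Gamma_pos_of_pos hb).le)
      have hreal : z * D = Real.Gamma (a + b) / (Real.Gamma a * Real.Gamma b)
          * (r ^ (a + b) / Real.Gamma (a + b) * z ^ (a + b - 1) * Real.exp (-(r * z))) := by
        rw [hDdef, hrab, ← hz1]
        field_simp
      rw [show (∫⁻ t, gammaPDF a r t * gammaPDF b r (z - t)) = ∫⁻ t, F t ∂volume from rfl,
        change, step3, gammaPDF_of_nonneg hz.le]
      calc ENNReal.ofReal z * (ENNReal.ofReal D * κ)
          = κ * ENNReal.ofReal (z * D) := by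
            rw [← mul_assoc, ← ENNReal.ofReal_mul hz.le, mul_comm]
        _ = κ' * ENNReal.ofReal
              (r ^ (a + b) / Real.Gamma (a + b) * z ^ (a + b - 1) * Real.exp (-(r * z))) := by
            rw [hreal, ENNReal.ofReal_mul hG, ← mul_assoc, ← hκ'def]
  -- assemble
  have hconv : Measure.conv (gammaMeasure a r) (gammaMeasure b r)
      = κ' • gammaMeasure (a + b) r := by
    rw [gammaMeasure, gammaMeasure, conv_withDensity (measurable_gammaPDF a r)
      (measurable_gammaPDF b r)]
    have hae : (fun z => ∫⁻ t, gammaPDF a r t * gammaPDF b r (z - t))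
        =ᵐ[volume] (fun z => κ' * gammaPDF (a + b) r z) := by
      refine (ae_iff).mpr (measure_mono_null (t := {(0:ℝ)}) (fun z hz => ?_)
        Real.volume_singleton)
      simp only [Set.mem_setOf_eq] at hz
      simp only [Set.mem_singleton_iff]
      by_contra hne
      exact hz (key z hne)
    rw [withDensity_congr_ae hae]
    calc volume.withDensity (fun z => κ' * gammaPDF (a + b) r z)
        = volume.withDensity (κ' • gammaPDF (a + b) r) := rfl
      _ = κ' • volume.withDensity (gammaPDF (a + b) r) :=
          withDensity_smul κ' (measurable_gammaPDF _ _)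
      _ = κ' • gammaMeasure (a + b) r := rfl
  have hκ'1 : κ' = 1 := by
    have := congrArg (fun m : Measure ℝ => m Set.univ) hconv
    simp only [Measure.smul_apply, smul_eq_mul, measure_univ, mul_one] at this
    exact this.symm
  rw [hconv, hκ'1, one_smul]


/-- helper: probability of bind -/
lemma isProbabilityMeasure_bind {α β : Type*} [MeasurableSpace α] [MeasurableSpace β]
    {μ : Measure α} [IsProbabilityMeasure μ] {F : α → Measure β} (hF : Measurable F)
    (h : ∀ a, IsProbabilityMeasure (F a)) : IsProbabilityMeasure (μ.bind F) := by
  constructor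
  rw [Measure.bind_apply MeasurableSet.univ hF.aemeasurable]
  have : ∀ a, (F a) Set.univ = 1 := fun a => (h a).measure_univ
  simp [this]

/-- the jump-size component -/
def Gk (θ : ℝ) (k : ℕ) : Measure ℝ := if k = 0 then Measure.dirac 0 else gammaMeasure k θ

lemma measurable_Gk (θ : ℝ) : Measurable (Gk θ) := measurable_from_top

instance Gk_prob (θ : ℝ) [Fact (0 < θ)] (k : ℕ) : IsProbabilityMeasure (Gk θ k) := by
  rw [Gk]
  split_ifs with h
  · infer_instance
  · exact isProbabilityMeasure_gammaMeasure (by positivity) (Fact.out : 0 < θ)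

lemma Gk_add (θ : ℝ) (hθ : 0 < θ) (k l : ℕ) :
    Gk θ (k + l) = Measure.conv (Gk θ k) (Gk θ l) := by
  haveI : Fact (0 < θ) := ⟨hθ⟩
  rcases Nat.eq_zero_or_pos k with hk | hk
  · subst hk
    rw [zero_add, show Gk θ 0 = Measure.dirac 0 from if_pos rfl]
    simp
  rcases Nat.eq_zero_or_pos l with hl | hl
  · subst hl
    rw [add_zero, show Gk θ 0 = Measure.dirac 0 from if_pos rfl]
    simp
  have hk0 : k ≠ 0 := hk.ne'
  have hl0 : l ≠ 0 := hl.ne'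
  rw [Gk, Gk, Gk, if_neg (by omega), if_neg hk0, if_neg hl0,
    gammaMeasure_conv (by positivity) (by positivity) hθ]
  norm_num

/-- compound Poisson law -/
def cp (θ : ℝ) (r : ℝ≥0) : Measure ℝ := (poissonMeasure r).bind (Gk θ)

lemma measurable_poissonMeasure : Measurable (fun r : ℝ≥0 => poissonMeasure r) := by
  apply Measure.measurable_of_measurable_coe
  intro s hs
  simp only [poissonMeasure, Measure.sum_apply _ hs, Measure.smul_apply,
    Measure.dirac_apply' _ hs, smul_eq_mul]
  apply Measurable.ennreal_tsum
  intro n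
  apply Measurable.mul_const
  apply Measurable.ennreal_ofReal
  fun_prop

lemma measurable_cp (θ : ℝ) : Measurable (cp θ) :=
  (Measure.measurable_bind' (measurable_Gk θ)).comp measurable_poissonMeasure

instance cp_prob (θ : ℝ) [Fact (0 < θ)] (r : ℝ≥0) : IsProbabilityMeasure (cp θ r) :=
  isProbabilityMeasure_bind (measurable_Gk θ) fun k => Gk_prob θ k

lemma cp_add (θ : ℝ) (hθ : 0 < θ) (r s : ℝ≥0) :
    cp θ (r + s) = Measure.conv (cp θ r) (cp θ s) := by
  haveI : Fact (0 < θ) := ⟨hθ⟩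
  refine ext_of_lintegral _ _ fun f hf => ?_
  have hGlint : Measurable fun k => ∫⁻ x, f x ∂Gk θ k := measurable_from_top
  -- LHS
  rw [cp, poissonMeasure_add, Measure.lintegral_bind (measurable_Gk θ).aemeasurable hf.aemeasurable,
    lintegral_conv hGlint]
  -- now: ∫⁻ k ∂pa, ∫⁻ l ∂pb, ∫⁻ f ∂(Gk (k+l))
  have step1 : ∀ k l : ℕ, (∫⁻ x, f x ∂Gk θ (k + l))
      = ∫⁻ u, ∫⁻ v, f (u + v) ∂Gk θ l ∂Gk θ k := by
    intro k l
    rw [Gk_add θ hθ k l, lintegral_conv hf]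
  -- RHS
  haveI : IsProbabilityMeasure ((poissonMeasure s).bind (Gk θ)) := cp_prob θ s
  rw [lintegral_conv hf, cp, cp,
    Measure.lintegral_bind (measurable_Gk θ).aemeasurable
      (show Measurable fun u => ∫⁻ v, f (u + v) ∂((poissonMeasure s).bind (Gk θ)) from
        Measurable.lintegral_prod_right'
          (show Measurable fun p : ℝ × ℝ => f (p.1 + p.2) from hf.comp measurable_add)).aemeasurable]
  refine lintegral_congr fun k => ?_
  rw [lintegral_congr (step1 k)]
  have inner : ∀ u : ℝ, ∫⁻ v, f (u + v) ∂((poissonMeasure s).bind (Gk θ))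
      = ∫⁻ l, ∫⁻ v, f (u + v) ∂Gk θ l ∂poissonMeasure s := fun u =>
    Measure.lintegral_bind (measurable_Gk θ).aemeasurable (hf.comp (measurable_const_add u)).aemeasurable
  rw [lintegral_congr inner]
  -- swap ∫pb l and ∫_{Gk k} u
  let κ : Kernel (ℕ × ℝ) ℝ := ⟨fun p => Gk θ p.1, (measurable_Gk θ).comp measurable_fst⟩
  haveI : IsMarkovKernel κ := ⟨fun p => Gk_prob θ p.1⟩
  have hswap := lintegral_lintegral_swap (μ := poissonMeasure s) (ν := Gk θ k)
    (f := fun l u => ∫⁻ v, f (u + v) ∂Gk θ l) ?_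
  · exact hswap
  · have : Measurable fun p : ℕ × ℝ => ∫⁻ v, f (p.2 + v) ∂(κ p) :=
      Measurable.lintegral_kernel_prod_right
        (show Measurable (Function.uncurry fun (p : ℕ × ℝ) (v : ℝ) => f (p.2 + v)) from
          hf.comp ((measurable_snd.comp measurable_fst).add measurable_snd))
    exact this.aemeasurable
/-- the drift kernel `x ↦ compound Poisson with rate x·θ` -/
def Fk (θ : ℝ) (x : ℝ) : Measure ℝ := cp θ (Real.toNNReal (x * θ))

lemma measurable_Fk (θ : ℝ) : Measurable (Fk θ) :=
  (measurable_cp θ).comp (measurable_real_toNNReal.comp (measurable_mul_const θ))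

instance Fk_prob (θ : ℝ) [Fact (0 < θ)] (x : ℝ) : IsProbabilityMeasure (Fk θ x) :=
  cp_prob θ _

lemma Fk_add (θ : ℝ) (hθ : 0 < θ) {x y : ℝ} (hx : 0 ≤ x) (hy : 0 ≤ y) :
    Fk θ (x + y) = Measure.conv (Fk θ x) (Fk θ y) := by
  rw [Fk, Fk, Fk, add_mul, Real.toNNReal_add (mul_nonneg hx hθ.le) (mul_nonneg hy hθ.le),
    cp_add θ hθ]

lemma mixtureLaw_eq (lam τ : ℝ) (μX : Measure ℝ) :
    mixtureLaw lam τ μX = μX.bind (Fk (lam * τ / (1 - τ))) := by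
  unfold mixtureLaw
  congr 1
  funext x
  rw [show x * lam * τ / (1 - τ) = x * (lam * τ / (1 - τ)) by ring]
  rfl

lemma conv_Iio_zero (μ ν : Measure ℝ) [SFinite μ] [SFinite ν]
    (hμ : μ (Iio 0) = 0) (hν : ν (Iio 0) = 0) : (Measure.conv μ ν) (Iio 0) = 0 := by
  rw [Measure.conv, Measure.map_apply measurable_add measurableSet_Iio]
  have hsub : ((fun p : ℝ × ℝ => p.1 + p.2) ⁻¹' Iio 0)
      ⊆ ((Iio 0) ×ˢ (univ : Set ℝ)) ∪ ((univ : Set ℝ) ×ˢ (Iio 0)) := by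
    intro p hp
    simp only [Set.mem_preimage, Set.mem_Iio] at hp
    by_cases h1 : p.1 < 0
    · exact Set.mem_union_left _ ⟨h1, trivial⟩
    · push_neg at h1
      exact Set.mem_union_right _ ⟨trivial, by simp only [Set.mem_Iio]; linarith⟩
  have hun : (μ.prod ν) (((Iio 0) ×ˢ (univ : Set ℝ)) ∪ ((univ : Set ℝ) ×ˢ (Iio 0))) = 0 :=
    measure_union_null (by rw [Measure.prod_prod, hμ, zero_mul])
      (by rw [Measure.prod_prod, hν, mul_zero])
  exact measure_mono_null hsub hun

lemma ae_nonneg_of_Iio (μ : Measure ℝ) (hμ : μ (Iio 0) = 0) : ∀ᵐ x ∂μ, 0 ≤ x := by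
  rw [ae_iff]
  have : {a : ℝ | ¬0 ≤ a} = Iio 0 := by ext a; simp [not_le]
  rw [this]
  exact hμ

/-- the central binary lemma: the compound-Poisson kernel turns convolution into
convolution. -/
lemma bind_Fk_conv (θ : ℝ) (hθ : 0 < θ) (μ ν : Measure ℝ)
    [IsProbabilityMeasure μ] [IsProbabilityMeasure ν]
    (hμ : μ (Iio 0) = 0) (hν : ν (Iio 0) = 0) :
    (Measure.conv μ ν).bind (Fk θ) = Measure.conv (μ.bind (Fk θ)) (ν.bind (Fk θ)) := by
  haveI : Fact (0 < θ) := ⟨hθ⟩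
  haveI hbν : IsProbabilityMeasure (ν.bind (Fk θ)) :=
    isProbabilityMeasure_bind (measurable_Fk θ) fun x => Fk_prob θ x
  haveI hbμ : IsProbabilityMeasure (μ.bind (Fk θ)) :=
    isProbabilityMeasure_bind (measurable_Fk θ) fun x => Fk_prob θ x
  have hμae := ae_nonneg_of_Iio μ hμ
  have hνae := ae_nonneg_of_Iio ν hν
  refine ext_of_lintegral _ _ fun f hf => ?_
  have hψ : Measurable fun x => ∫⁻ u, f u ∂(Fk θ x) :=
    (Measure.measurable_lintegral hf).comp (measurable_Fk θ)
  have key : ∀ᵐ x ∂μ, (∫⁻ y, (∫⁻ u, f u ∂(Fk θ (x + y))) ∂ν)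
      = ∫⁻ y, ∫⁻ u, ∫⁻ v, f (u + v) ∂(Fk θ y) ∂(Fk θ x) ∂ν := by
    filter_upwards [hμae] with x hx
    refine lintegral_congr_ae ?_
    filter_upwards [hνae] with y hy
    rw [Fk_add θ hθ hx hy, lintegral_conv hf]
  have swap : ∀ x : ℝ, (∫⁻ y, ∫⁻ u, ∫⁻ v, f (u + v) ∂(Fk θ y) ∂(Fk θ x) ∂ν)
      = ∫⁻ u, ∫⁻ y, ∫⁻ v, f (u + v) ∂(Fk θ y) ∂ν ∂(Fk θ x) := by
    intro x
    refine lintegral_lintegral_swap ?_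
    let κ : Kernel (ℝ × ℝ) ℝ := ⟨fun p => Fk θ p.1, (measurable_Fk θ).comp measurable_fst⟩
    haveI : IsMarkovKernel κ := ⟨fun p => Fk_prob θ p.1⟩
    exact (Measurable.lintegral_kernel_prod_right (κ := κ)
      (show Measurable (Function.uncurry fun (p : ℝ × ℝ) (v : ℝ) => f (p.2 + v)) from
        hf.comp ((measurable_snd.comp measurable_fst).add measurable_snd))).aemeasurable
  calc ∫⁻ z, f z ∂((Measure.conv μ ν).bind (Fk θ))
      = ∫⁻ x, ∫⁻ y, (∫⁻ u, f u ∂(Fk θ (x + y))) ∂ν ∂μ := by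
        rw [Measure.lintegral_bind (measurable_Fk θ).aemeasurable hf.aemeasurable, lintegral_conv hψ]
    _ = ∫⁻ x, ∫⁻ y, ∫⁻ u, ∫⁻ v, f (u + v) ∂(Fk θ y) ∂(Fk θ x) ∂ν ∂μ :=
        lintegral_congr_ae key
    _ = ∫⁻ x, ∫⁻ u, ∫⁻ y, ∫⁻ v, f (u + v) ∂(Fk θ y) ∂ν ∂(Fk θ x) ∂μ :=
        lintegral_congr swap
    _ = ∫⁻ z, f z ∂(Measure.conv (μ.bind (Fk θ)) (ν.bind (Fk θ))) := by
        rw [lintegral_conv hf,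
          Measure.lintegral_bind (measurable_Fk θ).aemeasurable
            (show Measurable fun u => ∫⁻ v, f (u + v) ∂(ν.bind (Fk θ)) from
              Measurable.lintegral_prod_right'
                (show Measurable fun p : ℝ × ℝ => f (p.1 + p.2) from hf.comp measurable_add)).aemeasurable]
        refine lintegral_congr fun x => lintegral_congr fun u => ?_
        rw [Measure.lintegral_bind (measurable_Fk θ).aemeasurable (show Measurable fun w => f (u + w) from hf.comp (measurable_const_add u)).aemeasurable]

lemma poissonMeasure_zero : poissonMeasure 0 = Measure.dirac 0 := by
  refine Measure.ext_of_singleton fun n => ?_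
  rw [poissonMeasure_singleton]
  rcases Nat.eq_zero_or_pos n with hn | hn
  · subst hn
    simp [poissonPMFReal]
  · have h1 : poissonPMFReal 0 n = 0 := by
      simp [poissonPMFReal, zero_pow hn.ne']
    rw [h1, Measure.dirac_apply' _ (measurableSet_singleton n)]
    simp [Set.indicator_apply, hn.ne]

lemma Fk_zero (θ : ℝ) : Fk θ 0 = Measure.dirac 0 := by
  rw [Fk, zero_mul, Real.toNNReal_zero, cp, poissonMeasure_zero,
    Measure.dirac_bind (measurable_Gk θ)]
  exact if_pos rfl

/-! ### list convolution lemmas -/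

def lc (l : List (Measure ℝ)) : Measure ℝ := l.foldr Measure.conv (Measure.dirac 0)

lemma lc_nil : lc [] = Measure.dirac 0 := rfl

lemma lc_cons (a : Measure ℝ) (t : List (Measure ℝ)) : lc (a :: t) = Measure.conv a (lc t) :=
  rfl

lemma lc_prob (l : List (Measure ℝ)) (h : ∀ m ∈ l, IsProbabilityMeasure m) :
    IsProbabilityMeasure (lc l) := by
  induction l with
  | nil => rw [lc_nil]; infer_instance
  | cons a t ih =>
    haveI := h a (List.mem_cons_self)
    haveI := ih fun m hm => h m (List.mem_cons_of_mem _ hm)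
    rw [lc_cons]
    exact Measure.probabilitymeasure_of_probabilitymeasures_conv _ _

lemma lc_Iio (l : List (Measure ℝ)) (hp : ∀ m ∈ l, IsProbabilityMeasure m)
    (h : ∀ m ∈ l, m (Iio 0) = 0) : (lc l) (Iio 0) = 0 := by
  induction l with
  | nil =>
    rw [lc_nil, Measure.dirac_apply' _ measurableSet_Iio]
    simp
  | cons a t ih =>
    haveI := hp a (List.mem_cons_self)
    haveI := lc_prob t fun m hm => hp m (List.mem_cons_of_mem _ hm)
    rw [lc_cons]
    exact conv_Iio_zero _ _ (h a (List.mem_cons_self))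
      (ih (fun m hm => hp m (List.mem_cons_of_mem _ hm))
        (fun m hm => h m (List.mem_cons_of_mem _ hm)))

lemma conv4 (a b c d : Measure ℝ) [SFinite a] [SFinite b] [SFinite c] [SFinite d] :
    Measure.conv (Measure.conv a b) (Measure.conv c d)
      = Measure.conv (Measure.conv a c) (Measure.conv b d) := by
  rw [conv_assoc a b (Measure.conv c d), conv_assoc a c (Measure.conv b d)]
  congr 1
  rw [← conv_assoc b c d, Measure.conv_comm b c, conv_assoc c b d]

lemma lc_conv_map (f g : Measure ℝ → Measure ℝ) (l : List (Measure ℝ))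
    (hf : ∀ m ∈ l, IsProbabilityMeasure (f m)) (hg : ∀ m ∈ l, IsProbabilityMeasure (g m)) :
    lc (l.map fun m => Measure.conv (f m) (g m))
      = Measure.conv (lc (l.map f)) (lc (l.map g)) := by
  induction l with
  | nil => simp [lc_nil]
  | cons a t ih =>
    haveI := hf a (List.mem_cons_self)
    haveI := hg a (List.mem_cons_self)
    haveI := lc_prob (t.map f) (by
      intro m hm
      obtain ⟨x, hx, rfl⟩ := List.mem_map.mp hm
      exact hf x (List.mem_cons_of_mem _ hx))
    haveI := lc_prob (t.map g) (by
      intro m hm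
      obtain ⟨x, hx, rfl⟩ := List.mem_map.mp hm
      exact hg x (List.mem_cons_of_mem _ hx))
    simp only [List.map_cons, lc_cons]
    rw [ih (fun m hm => hf m (List.mem_cons_of_mem _ hm))
      (fun m hm => hg m (List.mem_cons_of_mem _ hm))]
    exact conv4 _ _ _ _

lemma lc_map_scale (c : ℝ) (l : List (Measure ℝ)) (h : ∀ m ∈ l, IsProbabilityMeasure m) :
    lc (l.map (Measure.map fun y => c * y)) = (lc l).map (fun y => c * y) := by
  induction l with
  | nil =>
    rw [List.map_nil, lc_nil, Measure.map_dirac' (measurable_const_mul c)]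
    simp
  | cons a t ih =>
    haveI := h a (List.mem_cons_self)
    haveI := lc_prob t fun m hm => h m (List.mem_cons_of_mem _ hm)
    rw [List.map_cons, lc_cons, lc_cons, ih (fun m hm => h m (List.mem_cons_of_mem _ hm)),
      map_conv]

lemma lc_gamma (c r : ℝ) (hc : 0 < c) (hr : 0 < r) :
    ∀ n : ℕ, 0 < n → lc (List.replicate n (gammaMeasure c r)) = gammaMeasure (n * c) r := by
  intro n
  induction n with
  | zero => intro h; exact absurd h (lt_irrefl 0)
  | succ n ih =>
    intro _
    haveI := isProbabilityMeasure_gammaMeasure hc hr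
    rcases Nat.eq_zero_or_pos n with hn | hn
    · subst hn
      rw [List.replicate_succ, List.replicate_zero, lc_cons, lc_nil]
      simp
    · haveI := isProbabilityMeasure_gammaMeasure (show (0:ℝ) < n * c by positivity) hr
      rw [List.replicate_succ, lc_cons, ih hn,
        gammaMeasure_conv hc (by positivity) hr]
      congr 1
      push_cast
      ring

lemma lc_bind_Fk (θ : ℝ) (hθ : 0 < θ) (l : List (Measure ℝ))
    (hp : ∀ m ∈ l, IsProbabilityMeasure m) (h0 : ∀ m ∈ l, m (Iio 0) = 0) :
    lc (l.map fun m => m.bind (Fk θ)) = (lc l).bind (Fk θ) := by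
  induction l with
  | nil =>
    rw [List.map_nil, lc_nil, Measure.dirac_bind (measurable_Fk θ), Fk_zero]
  | cons a t ih =>
    haveI := hp a (List.mem_cons_self)
    haveI := lc_prob t fun m hm => hp m (List.mem_cons_of_mem _ hm)
    rw [List.map_cons, lc_cons, lc_cons,
      ih (fun m hm => hp m (List.mem_cons_of_mem _ hm))
        (fun m hm => h0 m (List.mem_cons_of_mem _ hm)),
      bind_Fk_conv θ hθ a (lc t) (h0 a (List.mem_cons_self))
        (lc_Iio t (fun m hm => hp m (List.mem_cons_of_mem _ hm))
          (fun m hm => h0 m (List.mem_cons_of_mem _ hm)))]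

end SmartAux
/-- Smart path of an independent sum: `X_τ(X₁ + ⋯ + X_N)` has the same law as
`Σᵢ [(1-τ)γⁱ(α/N,λ) + τ Yⁱ(τ,X_i,λ)]` with all ingredients independent. -/
theorem smartLaw_conv (α lam τ : ℝ) (hα : 0 < α) (hlam : 0 < lam)
    (hτ : τ ∈ Ioo (0:ℝ) 1) (N : ℕ) (hN : 0 < N) (μ : Fin N → Measure ℝ)
    (hprob : ∀ i, IsProbabilityMeasure (μ i)) (hpos : ∀ i, μ i (Iic 0) = 0) :
    smartLaw α lam τ (convList μ) = convList (fun i => summandLaw α lam τ N (μ i)) := by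

  classical
  obtain ⟨hτ0, hτ1⟩ := hτ
  have h1τ : (0:ℝ) < 1 - τ := by linarith
  set θ : ℝ := lam * τ / (1 - τ) with hθdef
  have hθ : 0 < θ := by
    apply div_pos (by positivity) h1τ
  haveI : Fact (0 < θ) := ⟨hθ⟩
  set l : List (Measure ℝ) := List.ofFn μ with hl
  have hlp : ∀ m ∈ l, IsProbabilityMeasure m := by
    intro m hm
    rw [hl, List.mem_ofFn] at hm
    obtain ⟨i, rfl⟩ := hm
    exact hprob i
  have hl0 : ∀ m ∈ l, m (Iio 0) = 0 := by
    intro m hm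
    rw [hl, List.mem_ofFn] at hm
    obtain ⟨i, rfl⟩ := hm
    exact measure_mono_null Set.Iio_subset_Iic_self (hpos i)
  have hαN : (0:ℝ) < α / N := div_pos hα (by exact_mod_cast hN)
  haveI hγ : IsProbabilityMeasure (gammaMeasure (α / N) lam) :=
    isProbabilityMeasure_gammaMeasure hαN hlam
  -- rewrite the right-hand side
  have hRHS : convList (fun i => summandLaw α lam τ N (μ i))
      = Measure.conv
          (SmartAux.lc ((List.replicate N (gammaMeasure (α / N) lam)).map
            (Measure.map fun y => (1 - τ) * y)))
          (SmartAux.lc ((l.map fun m => m.bind (SmartAux.Fk θ)).map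
            (Measure.map fun y => τ * y))) := by
    have e0 : convList (fun i => summandLaw α lam τ N (μ i))
        = SmartAux.lc (l.map fun m => summandLaw α lam τ N m) := by
      rw [convList, hl, List.map_ofFn]
      rfl
    rw [e0]
    have e1 : (l.map fun m => summandLaw α lam τ N m)
        = l.map fun m => Measure.conv
            ((gammaMeasure (α / N) lam).map (fun y => (1 - τ) * y))
            (((m.bind (SmartAux.Fk θ))).map (fun y => τ * y)) := by
      refine List.map_congr_left fun m hm => ?_
      rw [summandLaw, SmartAux.mixtureLaw_eq, hθdef]
    rw [e1, SmartAux.lc_conv_map _ _ l ?_ ?_]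
    · congr 1
      · congr 1
        have : (l.map fun m => (gammaMeasure (α / N) lam).map (fun y => (1 - τ) * y))
            = List.replicate l.length
                ((gammaMeasure (α / N) lam).map (fun y => (1 - τ) * y)) := by
          rw [List.map_const']
        rw [this, hl, List.length_ofFn, ← List.map_replicate]
      · congr 1
        rw [List.map_map]
        rfl
    · intro m hm
      exact Measure.isProbabilityMeasure_map ((measurable_const_mul _).aemeasurable)
    · intro m hm
      haveI := hlp m hm
      haveI : IsProbabilityMeasure (m.bind (SmartAux.Fk θ)) :=
        SmartAux.isProbabilityMeasure_bind (SmartAux.measurable_Fk θ)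
          fun x => SmartAux.Fk_prob θ x
      exact Measure.isProbabilityMeasure_map ((measurable_const_mul _).aemeasurable)
  rw [hRHS,
    SmartAux.lc_map_scale _ _ (fun m hm => by
      rw [List.eq_of_mem_replicate hm]; exact hγ),
    SmartAux.lc_map_scale _ _ (fun m hm => by
      obtain ⟨x, hx, rfl⟩ := List.mem_map.mp hm
      haveI := hlp x hx
      exact SmartAux.isProbabilityMeasure_bind (SmartAux.measurable_Fk θ)
        fun x => SmartAux.Fk_prob θ x),
    SmartAux.lc_gamma _ _ hαN hlam N hN,
    SmartAux.lc_bind_Fk θ hθ l hlp hl0]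
  have hNα : (N : ℝ) * (α / N) = α := by
    field_simp
  rw [hNα, smartLaw, SmartAux.mixtureLaw_eq, hθdef]
  rfl
end
end

section
/- Let α > 0 and τ ∈ (0,1). The density g^{(α,λ)}(τ,u) of the gamma smart path X_τ satisfies g^{(α,λ)}(τ,u) ~ C_{τ,α,λ}·u^{α-1} as u → 0⁺, where C_{τ,α,λ} = (αλ^α/((1-τ)^α Γ(α+1)))·L(P_X)(λτ/(1-τ)) > 0 and L(P_X) is the Laplace transform of the law of X. -/
open MeasureTheory ProbabilityTheory Real Set Filter Topology

noncomputable section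

/-- Modified Bessel function of the first kind `I_ν` (power series definition). -/
def besselI (ν z : ℝ) : ℝ :=
  ∑' n : ℕ, (z / 2) ^ (2 * (n : ℝ) + ν) / ((n.factorial : ℝ) * Real.Gamma (n + ν + 1))

/-- Density of the Gamma(α,λ) distribution on `(0,∞)`. -/
def gammaDens (α lam u : ℝ) : ℝ :=
  lam ^ α / Real.Gamma α * u ^ (α - 1) * Real.exp (-lam * u)

/-- Density `g^{(α,λ)}(τ,·)` of the gamma smart path `X_τ` built from the
law `μX` of a positive random variable `X`. -/
def smartDens (α lam τ : ℝ) (μX : Measure ℝ) (u : ℝ) : ℝ :=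
  lam / (1 - τ) * (u / τ) ^ ((α - 1) / 2) * Real.exp (-lam * u / (1 - τ)) *
    ∫ x, (1 / x) ^ ((α - 1) / 2) * Real.exp (-lam * τ * x / (1 - τ)) *
      besselI (α - 1) (2 * lam * Real.sqrt (u * x * τ) / (1 - τ)) ∂μX

/-- Score function (derivative of the log-density). -/
def score (f : ℝ → ℝ) (u : ℝ) : ℝ := deriv (fun v => Real.log (f v)) u

/-- Localized Fisher information `I^τ_γ` of a density `f`:
`E[W(ρ_W(W) - ρ_{α,λ/(1-τ)}(W))²]`. -/
def locFisher (α lam τ : ℝ) (f : ℝ → ℝ) : ℝ :=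
  ∫ u in Ioi (0:ℝ), u * (score f u - ((α - 1) / u - lam / (1 - τ))) ^ 2 * f u

/-- Standardized Fisher information `J_{st,γ}` of a density `f`:
`E[W(ρ_W(W) - (α-1)/W + λ)²]`. -/
def stdFisher (α lam : ℝ) (f : ℝ → ℝ) : ℝ :=
  ∫ u in Ioi (0:ℝ), u * (score f u - ((α - 1) / u - lam)) ^ 2 * f u

/-- Relative entropy of a density `f` with respect to the Gamma(α,λ) density. -/
def relEntDens (α lam : ℝ) (f : ℝ → ℝ) : ℝ :=
  ∫ u in Ioi (0:ℝ), f u * Real.log (f u / gammaDens α lam u)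

def phiAux (α t : ℝ) : ℝ := ∑' n : ℕ, t ^ n / ((n.factorial : ℝ) * Real.Gamma ((n : ℝ) + α))

lemma gamma_shift_lb {α : ℝ} (hα : 0 < α) (m : ℕ) :
    α * Real.Gamma α ≤ Real.Gamma ((m : ℝ) + 1 + α) := by
  induction m with
  | zero =>
    simp only [Nat.cast_zero, zero_add]
    rw [show (1 : ℝ) + α = α + 1 by ring, Real.Gamma_add_one hα.ne']
  | succ m ih =>
    have h : ((m : ℝ) + 1 + 1 + α) = ((m : ℝ) + 1 + α) + 1 := by ring
    rw [Nat.cast_succ, h, Real.Gamma_add_one (by positivity)]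
    have h1 : (1 : ℝ) ≤ (m : ℝ) + 1 + α := by
      have : (0:ℝ) ≤ (m:ℝ) := Nat.cast_nonneg m
      linarith
    nlinarith [Real.Gamma_pos_of_pos (show (0:ℝ) < (m:ℝ) + 1 + α by positivity),
      mul_pos hα (Real.Gamma_pos_of_pos hα)]

lemma gamma_lb {α : ℝ} (hα : 0 < α) (n : ℕ) :
    min (Real.Gamma α) (α * Real.Gamma α) ≤ Real.Gamma ((n : ℝ) + α) := by
  cases n with
  | zero => simpa using min_le_left (Real.Gamma α) (α * Real.Gamma α)
  | succ m =>
    refine le_trans (min_le_right _ _) ?_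
    have := gamma_shift_lb hα m
    rwa [Nat.cast_succ]

lemma gamma_lb_pos {α : ℝ} (hα : 0 < α) : 0 < min (Real.Gamma α) (α * Real.Gamma α) := by
  have := Real.Gamma_pos_of_pos hα
  positivity

lemma summable_phiAux {α : ℝ} (hα : 0 < α) (t : ℝ) :
    Summable (fun n : ℕ => t ^ n / ((n.factorial : ℝ) * Real.Gamma ((n : ℝ) + α))) := by
  set c := min (Real.Gamma α) (α * Real.Gamma α) with hc
  have hcpos : 0 < c := gamma_lb_pos hα
  refine Summable.of_norm_bounded
      ((Real.summable_pow_div_factorial |t|).mul_left c⁻¹) (fun n => ?_)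
  have hg := gamma_lb hα n
  have hgpos : 0 < Real.Gamma ((n : ℝ) + α) := lt_of_lt_of_le hcpos hg
  have hfac : (0:ℝ) < (n.factorial : ℝ) := by positivity
  have h1 : ‖t ^ n / ((n.factorial : ℝ) * Real.Gamma ((n : ℝ) + α))‖
      = |t| ^ n / ((n.factorial : ℝ) * Real.Gamma ((n : ℝ) + α)) := by
    rw [norm_div, norm_pow, Real.norm_eq_abs, Real.norm_eq_abs,
      abs_of_pos (mul_pos hfac hgpos)]
  rw [h1]
  have h2 : |t| ^ n / ((n.factorial : ℝ) * Real.Gamma ((n : ℝ) + α))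
      ≤ |t| ^ n / ((n.factorial : ℝ) * c) :=
    div_le_div_of_nonneg_left (by positivity) (mul_pos hfac hcpos)
      (mul_le_mul_of_nonneg_left hg hfac.le)
  refine h2.trans (le_of_eq ?_)
  rw [div_mul_eq_div_div, div_eq_mul_inv (|t| ^ n / (n.factorial : ℝ)) c, mul_comm]

lemma exp_tsum (t : ℝ) : Real.exp t = ∑' n : ℕ, t ^ n / (n.factorial : ℝ) := by
  rw [Real.exp_eq_exp_ℝ, NormedSpace.exp_eq_tsum_div]

lemma phiAux_nonneg {α : ℝ} (hα : 0 < α) {t : ℝ} (ht : 0 ≤ t) : 0 ≤ phiAux α t := by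
  refine tsum_nonneg fun n => ?_
  have := gamma_lb hα n
  have := gamma_lb_pos hα
  positivity

lemma phiAux_le_exp {α : ℝ} (hα : 0 < α) {t : ℝ} (ht : 0 ≤ t) :
    phiAux α t ≤ (min (Real.Gamma α) (α * Real.Gamma α))⁻¹ * Real.exp t := by
  set c := min (Real.Gamma α) (α * Real.Gamma α) with hc
  have hcpos : 0 < c := gamma_lb_pos hα
  have h : phiAux α t ≤ ∑' n : ℕ, c⁻¹ * (t ^ n / (n.factorial : ℝ)) := by
    refine Summable.tsum_le_tsum (fun n => ?_) (summable_phiAux hα t)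
      ((Real.summable_pow_div_factorial t).mul_left _)
    have hg := gamma_lb hα n
    have hgpos : 0 < Real.Gamma ((n : ℝ) + α) := lt_of_lt_of_le hcpos hg
    have hfac : (0:ℝ) < (n.factorial : ℝ) := by positivity
    have h2 : t ^ n / ((n.factorial : ℝ) * Real.Gamma ((n : ℝ) + α))
        ≤ t ^ n / ((n.factorial : ℝ) * c) :=
      div_le_div_of_nonneg_left (by positivity) (mul_pos hfac hcpos)
        (mul_le_mul_of_nonneg_left hg hfac.le)
    refine h2.trans (le_of_eq ?_)
    rw [div_mul_eq_div_div, div_eq_mul_inv (t ^ n / (n.factorial : ℝ)) c, mul_comm]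
  rw [tsum_mul_left] at h
  rw [exp_tsum]
  exact h

lemma phiAux_ge {α : ℝ} (hα : 0 < α) {t : ℝ} (ht : 0 ≤ t) :
    (Real.Gamma α)⁻¹ ≤ phiAux α t := by
  have h0 : (fun n : ℕ => t ^ n / ((n.factorial : ℝ) * Real.Gamma ((n : ℝ) + α))) 0
      = (Real.Gamma α)⁻¹ := by
    simp only [pow_zero, Nat.factorial_zero, Nat.cast_zero, Nat.cast_one, zero_add, one_mul,
      one_div]
  rw [← h0]
  refine Summable.le_tsum (summable_phiAux hα t) 0 (fun j _ => ?_)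
  have := gamma_lb hα j
  have := gamma_lb_pos hα
  positivity

def phiK (α : ℝ) : ℝ :=
  ∑' n : ℕ, (1:ℝ) / (((n+1).factorial : ℝ) * Real.Gamma (((n:ℝ) + 1) + α))

lemma summable_tail {α : ℝ} (hα : 0 < α) (t : ℝ) :
    Summable (fun n : ℕ =>
      t ^ (n+1) / ((((n+1).factorial : ℝ)) * Real.Gamma (((n:ℝ) + 1) + α))) := by
  have h := (summable_nat_add_iff 1).2 (summable_phiAux hα t)
  refine h.congr fun n => ?_
  push_cast
  ring_nf

lemma phiK_summable {α : ℝ} (hα : 0 < α) :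
    Summable (fun n : ℕ =>
      (1:ℝ) / (((n+1).factorial : ℝ) * Real.Gamma (((n:ℝ) + 1) + α))) := by
  have := summable_tail hα 1
  simpa using this

lemma phiAux_le {α : ℝ} (hα : 0 < α) {t : ℝ} (ht : 0 ≤ t) (ht1 : t ≤ 1) :
    phiAux α t ≤ (Real.Gamma α)⁻¹ + phiK α * t := by
  have hsum := summable_phiAux hα t
  have h0 : phiAux α t
      = t ^ 0 / ((Nat.factorial 0 : ℝ) * Real.Gamma (((0:ℕ):ℝ) + α))
        + ∑' n : ℕ, t ^ (n+1) / ((((n+1).factorial : ℝ)) * Real.Gamma ((((n+1):ℕ):ℝ) + α)) := by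
    rw [phiAux]; exact Summable.tsum_eq_zero_add hsum
  have h0' : t ^ 0 / ((Nat.factorial 0 : ℝ) * Real.Gamma (((0:ℕ):ℝ) + α)) = (Real.Gamma α)⁻¹ := by
    simp only [pow_zero, Nat.factorial_zero, Nat.cast_zero, Nat.cast_one, zero_add, one_mul, one_div]
  rw [h0, h0']
  have htail : ∑' n : ℕ, t ^ (n+1) / ((((n+1).factorial : ℝ)) * Real.Gamma ((((n+1):ℕ):ℝ) + α))
      ≤ ∑' n : ℕ, t * ((1:ℝ) / (((n+1).factorial : ℝ) * Real.Gamma (((n:ℝ) + 1) + α))) := by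
    refine Summable.tsum_le_tsum (fun n => ?_) ?_ ((phiK_summable hα).mul_left t)
    · have hg := gamma_lb hα (n+1)
      have hgpos : 0 < Real.Gamma (((n+1:ℕ):ℝ) + α) := lt_of_lt_of_le (gamma_lb_pos hα) hg
      have hcast : (((n+1:ℕ)):ℝ) = (n:ℝ) + 1 := by push_cast; ring
      rw [hcast] at hgpos ⊢
      have htn : t ^ (n+1) ≤ t := by
        calc t ^ (n+1) ≤ t ^ 1 := pow_le_pow_of_le_one ht ht1 (by omega)
        _ = t := pow_one t
      rw [mul_one_div]
      gcongr
    · have h := summable_tail hα t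
      refine h.congr fun n => ?_
      push_cast
      ring_nf
  have hK : ∑' n : ℕ, t * ((1:ℝ) / (((n+1).factorial : ℝ) * Real.Gamma (((n:ℝ) + 1) + α)))
      = phiK α * t := by
    rw [tsum_mul_left, mul_comm, phiK]
  linarith [htail, hK ▸ htail]

lemma besselI_eq' {α z : ℝ} (hz : 0 < z) :
    (∑' n : ℕ, (z / 2) ^ (2 * (n : ℝ) + (α - 1)) /
        ((n.factorial : ℝ) * Real.Gamma (n + (α - 1) + 1)))
      = (z / 2) ^ (α - 1) * phiAux α ((z / 2) ^ 2) := by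
  rw [phiAux, ← tsum_mul_left]
  refine tsum_congr fun n => ?_
  have hz2 : 0 < z / 2 := by linarith
  have h1 : (z / 2) ^ (2 * (n : ℝ) + (α - 1))
      = (z / 2) ^ (α - 1) * ((z / 2) ^ 2) ^ n := by
    rw [Real.rpow_add hz2]
    rw [show (2 * (n : ℝ)) = ((2 * n : ℕ) : ℝ) by push_cast; ring, Real.rpow_natCast, pow_mul]
    ring
  rw [h1]
  have h2 : ((n : ℝ) + (α - 1) + 1) = (n : ℝ) + α := by ring
  rw [h2, mul_div_assoc]

lemma measurable_phiAux_comp {α : ℝ} (hα : 0 < α) (a : ℝ) (μ : Measure ℝ) :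
    AEStronglyMeasurable (fun x : ℝ => phiAux α (a * x)) μ := by
  refine aestronglyMeasurable_of_tendsto_ae (atTop : Filter ℕ)
    (f := fun N x => ∑ n ∈ Finset.range N,
      (a * x) ^ n / ((n.factorial : ℝ) * Real.Gamma ((n : ℝ) + α)))
    (fun N => ?_) ?_
  · refine Continuous.aestronglyMeasurable ?_
    refine continuous_finset_sum _ fun n _ => ?_
    exact ((continuous_const.mul continuous_id).pow n).div_const _
  · exact Eventually.of_forall fun x => (summable_phiAux hα (a * x)).hasSum.tendsto_sum_nat
set_option maxHeartbeats 1000000 in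
/-- Small-`u` asymptotics of the smart-path density:
`g^{(α,λ)}(τ,u) ~ C_{τ,α,λ} u^{α-1}` as `u → 0⁺`, with
`C_{τ,α,λ} = (αλ^α/((1-τ)^α Γ(α+1)))·L(P_X)(λτ/(1-τ)) > 0`. -/
theorem smartDens_asymptotics_zero (α lam τ : ℝ) (hα : 0 < α) (hlam : 0 < lam)
    (hτ : τ ∈ Ioo (0:ℝ) 1) (μX : Measure ℝ) [IsProbabilityMeasure μX]
    (hXpos : μX (Iic 0) = 0) :
    0 < α * lam ^ α / ((1 - τ) ^ α * Real.Gamma (α + 1)) *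
        ∫ x, Real.exp (-(lam * τ / (1 - τ)) * x) ∂μX ∧
      Asymptotics.IsEquivalent (𝓝[>] 0) (fun u => smartDens α lam τ μX u)
        (fun u =>
          (α * lam ^ α / ((1 - τ) ^ α * Real.Gamma (α + 1)) *
              ∫ x, Real.exp (-(lam * τ / (1 - τ)) * x) ∂μX) * u ^ (α - 1)) := by
  obtain ⟨hτ0, hτ1⟩ := hτ
  have h1τ : 0 < 1 - τ := by linarith
  set k : ℝ := lam ^ 2 * τ / (1 - τ) ^ 2 with hk
  have hkpos : 0 < k := by positivity
  -- a.e. positivity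
  have haepos : ∀ᵐ x ∂μX, 0 < x := by
    rw [ae_iff]
    have hset : {x : ℝ | ¬ (0 < x)} = Iic 0 := by ext x; simp [not_lt]
    rw [hset]; exact hXpos
  -- Laplace transform value
  set L : ℝ := ∫ x, Real.exp (-(lam * τ / (1 - τ)) * x) ∂μX with hLdef
  have hmeasL : AEStronglyMeasurable (fun x : ℝ => Real.exp (-(lam * τ / (1 - τ)) * x)) μX :=
    (Real.continuous_exp.comp (continuous_const.mul continuous_id)).aestronglyMeasurable
  have hintL : Integrable (fun x : ℝ => Real.exp (-(lam * τ / (1 - τ)) * x)) μX := by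
    refine Integrable.mono' (integrable_const 1) hmeasL ?_
    filter_upwards [haepos] with x hx
    rw [Real.norm_eq_abs, abs_of_pos (Real.exp_pos _)]
    rw [Real.exp_le_one_iff]
    have : 0 < lam * τ / (1 - τ) := by positivity
    nlinarith
  have hLpos : 0 < L := integral_exp_pos hintL
  have hΓα : 0 < Real.Gamma α := Real.Gamma_pos_of_pos hα
  have hΓα1 : 0 < Real.Gamma (α + 1) := Real.Gamma_pos_of_pos (by linarith)
  have hlrp : 0 < lam ^ α := Real.rpow_pos_of_pos hlam α
  have hτrp : 0 < (1 - τ) ^ α := Real.rpow_pos_of_pos h1τ α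
  set C : ℝ := α * lam ^ α / ((1 - τ) ^ α * Real.Gamma (α + 1)) * L with hCdef
  have hCpos : 0 < C := by positivity
  have hlq : 0 < lam / (1 - τ) := by positivity
  have hCL : C = (lam / (1 - τ)) ^ α * (L * (Real.Gamma α)⁻¹) := by
    rw [hCdef, Real.Gamma_add_one hα.ne', Real.div_rpow hlam.le h1τ.le]
    field_simp
  -- main pointwise rewrite
  have hrw : ∀ u : ℝ, 0 < u →
      smartDens α lam τ μX u
        = (lam / (1 - τ)) ^ α * u ^ (α - 1) * Real.exp (-lam * u / (1 - τ)) *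
            ∫ x, Real.exp (-(lam * τ / (1 - τ)) * x) * phiAux α (k * u * x) ∂μX := by
    intro u hu
    rw [smartDens]
    have hint : (∫ x, (1 / x) ^ ((α - 1) / 2) * Real.exp (-lam * τ * x / (1 - τ)) *
        besselI (α - 1) (2 * lam * Real.sqrt (u * x * τ) / (1 - τ)) ∂μX)
        = ∫ x, ((lam / (1 - τ)) ^ (α - 1) * (u ^ ((α - 1) / 2) * τ ^ ((α - 1) / 2))) *
            (Real.exp (-(lam * τ / (1 - τ)) * x) * phiAux α (k * u * x)) ∂μX := by
      refine integral_congr_ae ?_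
      filter_upwards [haepos] with x hx
      have hs0 : (0:ℝ) ≤ u * x * τ := by positivity
      have hzpos : 0 < 2 * lam * Real.sqrt (u * x * τ) / (1 - τ) := by
        have := Real.sqrt_pos.2 (show 0 < u * x * τ by positivity)
        positivity
      rw [besselI, besselI_eq' hzpos]
      have hhalf : 2 * lam * Real.sqrt (u * x * τ) / (1 - τ) / 2
          = lam / (1 - τ) * Real.sqrt (u * x * τ) := by ring
      rw [hhalf]
      have hsq : (lam / (1 - τ) * Real.sqrt (u * x * τ)) ^ 2 = k * u * x := by
        rw [mul_pow, Real.sq_sqrt hs0, hk]; field_simp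
      rw [hsq]
      rw [Real.mul_rpow hlq.le (Real.sqrt_nonneg _)]
      rw [Real.sqrt_eq_rpow, ← Real.rpow_mul hs0,
        show 1 / (2:ℝ) * (α - 1) = (α - 1) / 2 by ring]
      rw [Real.mul_rpow (by positivity : (0:ℝ) ≤ u * x) hτ0.le,
        Real.mul_rpow hu.le hx.le]
      rw [one_div, Real.inv_rpow hx.le]
      rw [show Real.exp (-lam * τ * x / (1 - τ)) = Real.exp (-(lam * τ / (1 - τ)) * x) from
        congrArg Real.exp (by ring)]
      have hxb : x ^ ((α - 1) / 2) ≠ 0 := (Real.rpow_pos_of_pos hx _).ne'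
      field_simp
    rw [hint, integral_const_mul]
    have e1 : (lam / (1 - τ)) ^ ((1:ℝ) + (α - 1))
        = (lam / (1 - τ)) * (lam / (1 - τ)) ^ (α - 1) := by
      rw [Real.rpow_add hlq, Real.rpow_one]
    rw [show (1:ℝ) + (α - 1) = α by ring] at e1
    have e2 : u ^ ((α - 1) / 2 + (α - 1) / 2) = u ^ ((α - 1) / 2) * u ^ ((α - 1) / 2) :=
      Real.rpow_add hu _ _
    rw [show (α - 1) / 2 + (α - 1) / 2 = α - 1 by ring] at e2
    rw [Real.div_rpow hu.le hτ0.le, e1, e2]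
    have hτb : τ ^ ((α - 1) / 2) ≠ 0 := (Real.rpow_pos_of_pos hτ0 _).ne'
    field_simp
    ring_nf
    congr 1
    funext x
    ring_nf
  -- dominated convergence
  have htendI : Tendsto
      (fun u => ∫ x, Real.exp (-(lam * τ / (1 - τ)) * x) * phiAux α (k * u * x) ∂μX)
      (𝓝[>] (0:ℝ))
      (𝓝 (∫ x, Real.exp (-(lam * τ / (1 - τ)) * x) * (Real.Gamma α)⁻¹ ∂μX)) := by
    have hcminpos : 0 < min (Real.Gamma α) (α * Real.Gamma α) := gamma_lb_pos hα
    refine tendsto_integral_filter_of_dominated_convergence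
      (fun _ => (min (Real.Gamma α) (α * Real.Gamma α))⁻¹) ?_ ?_ (integrable_const _) ?_
    · exact Eventually.of_forall fun u => hmeasL.mul (measurable_phiAux_comp hα (k * u) μX)
    · have hu₀ : (0:ℝ) < (1 - τ) / (2 * lam) := by positivity
      filter_upwards [Ioo_mem_nhdsGT hu₀] with u hu
      filter_upwards [haepos] with x hx
      have hupos : 0 < u := hu.1
      have ht0 : 0 ≤ k * u * x := by positivity
      have hphi0 : 0 ≤ phiAux α (k * u * x) := phiAux_nonneg hα ht0
      rw [Real.norm_eq_abs, abs_of_nonneg (mul_nonneg (Real.exp_pos _).le hphi0)]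
      calc Real.exp (-(lam * τ / (1 - τ)) * x) * phiAux α (k * u * x)
          ≤ Real.exp (-(lam * τ / (1 - τ)) * x) *
            ((min (Real.Gamma α) (α * Real.Gamma α))⁻¹ * Real.exp (k * u * x)) :=
            mul_le_mul_of_nonneg_left (phiAux_le_exp hα ht0) (Real.exp_pos _).le
        _ = (min (Real.Gamma α) (α * Real.Gamma α))⁻¹ *
            (Real.exp (-(lam * τ / (1 - τ)) * x) * Real.exp (k * u * x)) := by ring
        _ = (min (Real.Gamma α) (α * Real.Gamma α))⁻¹ *
            Real.exp (-(lam * τ / (1 - τ)) * x + k * u * x) := by rw [← Real.exp_add]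
        _ ≤ (min (Real.Gamma α) (α * Real.Gamma α))⁻¹ * 1 := by
            refine mul_le_mul_of_nonneg_left ?_ (by positivity)
            rw [Real.exp_le_one_iff]
            have hku : k * u ≤ lam * τ / (1 - τ) := by
              have hub : u ≤ (1 - τ) / (2 * lam) := hu.2.le
              rw [hk]
              rw [div_mul_eq_mul_div, div_le_div_iff₀ (by positivity) (by positivity)]
              have key : lam ^ 2 * τ * (1 - τ) * ((1 - τ) / (2 * lam))
                  = lam * τ * (1 - τ) ^ 2 / 2 := by field_simp
              nlinarith [mul_le_mul_of_nonneg_left hub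
                  (show (0:ℝ) ≤ lam ^ 2 * τ * (1 - τ) by positivity),
                mul_pos (mul_pos hlam hτ0) (mul_pos h1τ h1τ)]
            nlinarith [mul_le_mul_of_nonneg_right hku hx.le]
        _ = (min (Real.Gamma α) (α * Real.Gamma α))⁻¹ := mul_one _
    · filter_upwards [haepos] with x hx
      have hkx : 0 < k * x := by positivity
      refine Tendsto.const_mul _ ?_
      refine tendsto_of_tendsto_of_tendsto_of_le_of_le'
        (h := fun u : ℝ => (Real.Gamma α)⁻¹ + phiK α * (k * u * x)) tendsto_const_nhds ?_ ?_ ?_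
      · have hcont : Tendsto (fun u : ℝ => (Real.Gamma α)⁻¹ + phiK α * (k * u * x)) (𝓝 0)
            (𝓝 ((Real.Gamma α)⁻¹ + phiK α * (k * 0 * x))) := by
          refine Tendsto.const_add _ (Tendsto.const_mul _ ?_)
          exact ((continuous_const.mul continuous_id).mul continuous_const).tendsto 0
        have : (Real.Gamma α)⁻¹ + phiK α * (k * 0 * x) = (Real.Gamma α)⁻¹ := by ring_nf
        rw [this] at hcont
        exact hcont.mono_left nhdsWithin_le_nhds
      · filter_upwards [self_mem_nhdsWithin] with u hu
        have hupos : 0 < u := hu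
        exact phiAux_ge hα (by positivity)
      · have h1 : (0:ℝ) < 1 / (k * x) := by positivity
        filter_upwards [Ioo_mem_nhdsGT h1] with u hu
        have hupos : 0 < u := hu.1
        have ht1 : k * u * x ≤ 1 := by
          have := hu.2
          rw [lt_div_iff₀ hkx] at this
          nlinarith
        exact phiAux_le hα (by positivity) ht1
  rw [integral_mul_const] at htendI
  -- exp factor tends to 1
  have hexp1 : Tendsto (fun u : ℝ => Real.exp (-lam * u / (1 - τ))) (𝓝[>] (0:ℝ)) (𝓝 1) := by
    have hcont : Tendsto (fun u : ℝ => Real.exp (-lam * u / (1 - τ))) (𝓝 0)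
        (𝓝 (Real.exp (-lam * 0 / (1 - τ)))) :=
      (Real.continuous_exp.comp ((continuous_const.mul continuous_id).div_const _)).tendsto 0
    have : Real.exp (-lam * 0 / (1 - τ)) = 1 := by rw [mul_zero, zero_div, Real.exp_zero]
    rw [this] at hcont
    exact hcont.mono_left nhdsWithin_le_nhds
  refine ⟨hCpos, ?_⟩
  refine Asymptotics.isEquivalent_of_tendsto_one ?_
  · have hTend : Tendsto (fun u => (lam / (1 - τ)) ^ α * Real.exp (-lam * u / (1 - τ)) *
        (∫ x, Real.exp (-(lam * τ / (1 - τ)) * x) * phiAux α (k * u * x) ∂μX) / C)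
        (𝓝[>] (0:ℝ))
        (𝓝 ((lam / (1 - τ)) ^ α * 1 * (L * (Real.Gamma α)⁻¹) / C)) :=
      ((tendsto_const_nhds.mul hexp1).mul htendI).div_const C
    have hval : (lam / (1 - τ)) ^ α * 1 * (L * (Real.Gamma α)⁻¹) / C = 1 := by
      rw [mul_one, ← hCL, div_self hCpos.ne']
    rw [hval] at hTend
    refine Tendsto.congr' ?_ hTend
    filter_upwards [self_mem_nhdsWithin] with u hu
    have hupos : 0 < u := hu
    have hurp : u ^ (α - 1) ≠ 0 := (Real.rpow_pos_of_pos hupos _).ne'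
    simp only [Pi.div_apply]
    rw [hrw u hupos]
    field_simp
    ring_nf
    congr 1
    funext x
    ring_nf
end
end
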